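/- arXiv:2501.03096 — 8 statements merged into one kernel-verified Lean document; each statement's English description precedes it below -/
import Mathlib

section
/- Let D be a symmetric n×n real matrix and let λ be an eigenvalue of D of maximal absolute value, with λ < 0. Then the Dirac measures δ_z with z a unit eigenvector of D for λ are minimizers of the energy E(μ) = ∬ exp(⟪x, D y⟫) dμ(x) dμ(y) over probability measures μ on the unit sphere, i.e. E(μ) ≥ e^λ for all such μ, with equality for μ = δ_z. -/
open MeasureTheory RealInnerProductSpace

noncomputable def energy {n : ℕ} (D : Matrix (Fin n) (Fin n) ℝ)
    (μ : Measure (EuclideanSpace ℝ (Fin n))) : ℝ :=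
  ∫ x, ∫ y, Real.exp ⟪x, Matrix.toEuclideanLin D y⟫ ∂μ ∂μ

def IsEigenvalue {n : ℕ} (D : Matrix (Fin n) (Fin n) ℝ) (l : ℝ) : Prop :=
  ∃ v : EuclideanSpace ℝ (Fin n), v ≠ 0 ∧ Matrix.toEuclideanLin D v = l • v

lemma key_ineq {n : ℕ} (D : Matrix (Fin n) (Fin n) ℝ) (hD : D.IsSymm) (lam : ℝ)
    (hmax : ∀ l : ℝ, IsEigenvalue D l → |l| ≤ |lam|) (hneg : lam < 0)
    {x y : EuclideanSpace ℝ (Fin n)} (hx : ‖x‖ = 1) (hy : ‖y‖ = 1) :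
    lam ≤ ⟪x, Matrix.toEuclideanLin D y⟫ := by
  have hHerm : D.IsHermitian := by
    rwa [Matrix.IsHermitian, Matrix.conjTranspose_eq_transpose_of_trivial]
  have hS : (Matrix.toEuclideanLin D).IsSymmetric :=
    Matrix.isHermitian_iff_isSymmetric.1 hHerm
  have hn : Module.finrank ℝ (EuclideanSpace ℝ (Fin n)) = n := finrank_euclideanSpace_fin
  set b := hS.eigenvectorBasis hn with hb
  set ev := hS.eigenvalues hn with hev
  have hμ : ∀ i, |ev i| ≤ -lam := by
    intro i
    have h1 := hmax (ev i) ⟨b i, by simpa using b.toBasis.ne_zero i,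
      hS.apply_eigenvectorBasis hn i⟩
    rwa [abs_of_neg hneg] at h1
  set a : EuclideanSpace ℝ (Fin n) := b.repr x with ha
  set c : EuclideanSpace ℝ (Fin n) := b.repr y with hc
  have hkey : ⟪x, Matrix.toEuclideanLin D y⟫ =
      ∑ i, a i * (ev i * c i) := by
    rw [← b.repr.inner_map_map x (Matrix.toEuclideanLin D y), PiLp.inner_apply]
    simp only [RCLike.inner_apply, conj_trivial]
    congr 1
    funext i
    rw [hS.eigenvectorBasis_apply_self_apply hn y i]
    exact mul_comm _ _
  have hna : ‖a‖ = 1 := by rw [ha, b.repr.norm_map, hx]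
  have hnc : ‖c‖ = 1 := by rw [hc, b.repr.norm_map, hy]
  have hCS : ∑ i, |a i| * |c i| ≤ 1 := by
    have := Real.sum_mul_le_sqrt_mul_sqrt Finset.univ (fun i => |a i|) (fun i => |c i|)
    simp only [sq_abs] at this
    have hea : Real.sqrt (∑ i, a i ^ 2) = ‖a‖ := by
      simp [EuclideanSpace.norm_eq, Real.norm_eq_abs, sq_abs]
    have hec : Real.sqrt (∑ i, c i ^ 2) = ‖c‖ := by
      simp [EuclideanSpace.norm_eq, Real.norm_eq_abs, sq_abs]
    rw [hea, hec, hna, hnc, mul_one] at this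
    exact this
  rw [hkey]
  have hterm : ∀ i ∈ Finset.univ, -((-lam) * (|a i| * |c i|)) ≤ a i * (ev i * c i) := by
    intro i _
    have h1 : |a i * (ev i * c i)| ≤ (-lam) * (|a i| * |c i|) := by
      rw [abs_mul, abs_mul]
      calc |a i| * (|ev i| * |c i|) ≤ |a i| * ((-lam) * |c i|) := by
            apply mul_le_mul_of_nonneg_left (mul_le_mul_of_nonneg_right (hμ i) (abs_nonneg _))
              (abs_nonneg _)
        _ = (-lam) * (|a i| * |c i|) := by ring
    linarith [neg_abs_le (a i * (ev i * c i))]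
  calc lam = -((-lam) * 1) := by ring
    _ ≤ -((-lam) * ∑ i, |a i| * |c i|) := by
        have : (-lam) * ∑ i, |a i| * |c i| ≤ (-lam) * 1 :=
          mul_le_mul_of_nonneg_left hCS (by linarith)
        linarith
    _ = ∑ i, -((-lam) * (|a i| * |c i|)) := by rw [Finset.mul_sum, ← Finset.sum_neg_distrib]
    _ ≤ ∑ i, a i * (ev i * c i) := Finset.sum_le_sum hterm

theorem stmt1 {n : ℕ} (D : Matrix (Fin n) (Fin n) ℝ) (hD : D.IsSymm)
    (lam : ℝ) (hlam : IsEigenvalue D lam)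
    (hmax : ∀ l : ℝ, IsEigenvalue D l → |l| ≤ |lam|)
    (hneg : lam < 0) :
    (∀ μ : Measure (EuclideanSpace ℝ (Fin n)), IsProbabilityMeasure μ →
      μ (Metric.sphere (0 : EuclideanSpace ℝ (Fin n)) 1) = 1 →
      Real.exp lam ≤ energy D μ) ∧
    (∀ z : EuclideanSpace ℝ (Fin n), ‖z‖ = 1 →
      Matrix.toEuclideanLin D z = lam • z →
      energy D (Measure.dirac z) = Real.exp lam) := by
  set T' := LinearMap.toContinuousLinearMap (Matrix.toEuclideanLin D) with hT'
  set C := Real.exp ‖T'‖ with hC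
  have hTT : ∀ y, Matrix.toEuclideanLin D y = T' y := fun y => rfl
  have hbd : ∀ x y : EuclideanSpace ℝ (Fin n), ‖x‖ = 1 → ‖y‖ = 1 →
      Real.exp ⟪x, Matrix.toEuclideanLin D y⟫ ≤ C := by
    intro x y hx hy
    apply Real.exp_le_exp.2
    calc ⟪x, Matrix.toEuclideanLin D y⟫ ≤ ‖x‖ * ‖Matrix.toEuclideanLin D y‖ :=
          real_inner_le_norm _ _
      _ = ‖T' y‖ := by rw [hx, one_mul, hTT]
      _ ≤ ‖T'‖ * ‖y‖ := T'.le_opNorm y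
      _ = ‖T'‖ := by rw [hy, mul_one]
  constructor
  · intro μ hprob hsph
    have hmS : MeasurableSet (Metric.sphere (0 : EuclideanSpace ℝ (Fin n)) 1) :=
      (Metric.isClosed_sphere).measurableSet
    have haes : ∀ᵐ z ∂μ, ‖z‖ = 1 := by
      have h0 : μ (Metric.sphere (0 : EuclideanSpace ℝ (Fin n)) 1)ᶜ = 0 := by
        rw [measure_compl hmS (measure_ne_top μ _), hsph, measure_univ, tsub_self]
      have : ∀ᵐ z ∂μ, z ∈ Metric.sphere (0 : EuclideanSpace ℝ (Fin n)) 1 := by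
        rw [ae_iff]
        convert h0 using 2
        rfl
      exact this.mono fun z hz => by simpa [mem_sphere_zero_iff_norm] using hz
    have hcont : Continuous fun p : EuclideanSpace ℝ (Fin n) × EuclideanSpace ℝ (Fin n) =>
        Real.exp ⟪p.1, Matrix.toEuclideanLin D p.2⟫ := by
      apply Real.continuous_exp.comp
      simp only [hTT]
      exact continuous_fst.inner (T'.continuous.comp continuous_snd)
    have hint : ∀ x : EuclideanSpace ℝ (Fin n), ‖x‖ = 1 →
        Integrable (fun y => Real.exp ⟪x, Matrix.toEuclideanLin D y⟫) μ := by
      intro x hx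
      refine (integrable_const C).mono' ?_ ?_
      · exact (hcont.comp (Continuous.prodMk_right x)).aestronglyMeasurable
      · exact haes.mono fun y hy => by
          rw [Real.norm_eq_abs, abs_of_pos (Real.exp_pos _)]
          exact hbd x y hx hy
    have hlow : ∀ x : EuclideanSpace ℝ (Fin n), ‖x‖ = 1 →
        Real.exp lam ≤ ∫ y, Real.exp ⟪x, Matrix.toEuclideanLin D y⟫ ∂μ := by
      intro x hx
      have h1 : ∫ (_ : EuclideanSpace ℝ (Fin n)), Real.exp lam ∂μ = Real.exp lam := by
        simp [measure_univ]
      rw [← h1]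
      exact integral_mono_ae (integrable_const _) (hint x hx)
        (haes.mono fun y hy => Real.exp_le_exp.2 (key_ineq D hD lam hmax hneg hx hy))
    have hup : ∀ x : EuclideanSpace ℝ (Fin n), ‖x‖ = 1 →
        ∫ y, Real.exp ⟪x, Matrix.toEuclideanLin D y⟫ ∂μ ≤ C := by
      intro x hx
      have h1 : ∫ (_ : EuclideanSpace ℝ (Fin n)), C ∂μ = C := by simp [measure_univ]
      rw [← h1]
      exact integral_mono_ae (hint x hx) (integrable_const C)
        (haes.mono fun y hy => hbd x y hx hy)
    have hFm : AEStronglyMeasurable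
        (fun x => ∫ y, Real.exp ⟪x, Matrix.toEuclideanLin D y⟫ ∂μ) μ :=
      (hcont.stronglyMeasurable.integral_prod_right').aestronglyMeasurable
    have hFint : Integrable
        (fun x => ∫ y, Real.exp ⟪x, Matrix.toEuclideanLin D y⟫ ∂μ) μ := by
      refine (integrable_const C).mono' hFm ?_
      exact haes.mono fun x hx => by
        rw [Real.norm_eq_abs, abs_of_nonneg (integral_nonneg fun y => (Real.exp_pos _).le)]
        exact hup x hx
    have h1 : ∫ (_ : EuclideanSpace ℝ (Fin n)), Real.exp lam ∂μ = Real.exp lam := by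
      simp [measure_univ]
    calc Real.exp lam = ∫ (_ : EuclideanSpace ℝ (Fin n)), Real.exp lam ∂μ := h1.symm
      _ ≤ energy D μ := integral_mono_ae (integrable_const _) hFint
          (haes.mono fun x hx => hlow x hx)
  · intro z hz hez
    unfold energy
    rw [integral_dirac, integral_dirac, hez, real_inner_smul_right,
      real_inner_self_eq_norm_sq, hz]
    norm_num
end

section
/- Let D be a symmetric n×n matrix with smallest eigenvalue λ_min < 0. A probability measure μ on the unit sphere minimizes E(μ) = ∬ exp(⟪x, D y⟫) dμ(x) dμ(y) if and only if μ = δ_z for some unit eigenvector z of D corresponding to λ_min. -/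
open MeasureTheory RealInnerProductSpace

section Aux

variable {n : ℕ}

local notation "E" => EuclideanSpace ℝ (Fin n)

lemma aux_ae_norm (ν : Measure E) [IsProbabilityMeasure ν]
    (hν : ν (Metric.sphere (0 : E) 1) = 1) : ∀ᵐ x ∂ν, ‖x‖ = 1 := by
  have hs : MeasurableSet (Metric.sphere (0 : E) 1) :=
    Metric.isClosed_sphere.measurableSet
  have h0 : ν (Metric.sphere (0 : E) 1)ᶜ = 0 := by
    rw [prob_compl_eq_zero_iff hs]; exact hν
  have : ∀ᵐ x ∂ν, x ∈ Metric.sphere (0 : E) 1 := mem_ae_iff.mpr h0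
  filter_upwards [this] with x hx
  simpa [mem_sphere_zero_iff_norm] using hx

lemma aux_int_id (ν : Measure E) [IsProbabilityMeasure ν]
    (hν : ν (Metric.sphere (0 : E) 1) = 1) : Integrable (fun x : E => x) ν := by
  refine (integrable_const (1 : ℝ)).mono' aestronglyMeasurable_id ?_
  filter_upwards [aux_ae_norm ν hν] with x hx
  simp [hx]

lemma aux_norm_integral_le (ν : Measure E) [IsProbabilityMeasure ν]
    (hν : ν (Metric.sphere (0 : E) 1) = 1) : ‖∫ x, x ∂ν‖ ≤ 1 := by
  have h := norm_integral_le_of_norm_le (f := fun x : E => x) (g := fun _ => (1 : ℝ))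
    (integrable_const 1) (by filter_upwards [aux_ae_norm ν hν] with x hx; simp [hx])
  simpa using h

lemma energy_ge (D : Matrix (Fin n) (Fin n) ℝ) (ν : Measure E) [IsProbabilityMeasure ν]
    (hν : ν (Metric.sphere (0 : E) 1) = 1) (lam : ℝ) :
    Real.exp lam * (1 + (⟪∫ x, x ∂ν, Matrix.toEuclideanLin D (∫ x, x ∂ν)⟫ - lam))
      ≤ energy D ν := by
  classical
  set T : E →L[ℝ] E := LinearMap.toContinuousLinearMap (Matrix.toEuclideanLin D) with hTdef
  have hTeq : ∀ v : E, Matrix.toEuclideanLin D v = T v := fun v => rfl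
  have hae := aux_ae_norm ν hν
  have hid := aux_int_id ν hν
  set m : E := ∫ x, x ∂ν with hm
  have hTν : Integrable (fun y : E => T y) ν := T.integrable_comp hid
  have hinner_int : ∀ x : E, Integrable (fun y : E => (⟪x, T y⟫ : ℝ)) ν := by
    intro x
    have := ((innerSL ℝ x).comp T).integrable_comp hid
    simpa using this
  have hinner_eq : ∀ x : E, ∫ y, (⟪x, T y⟫ : ℝ) ∂ν = ⟪x, T m⟫ := by
    intro x
    rw [integral_inner hTν x, T.integral_comp_comm hid]
  have hcont : Continuous fun p : E × E => Real.exp ⟪p.1, T p.2⟫ :=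
    Real.continuous_exp.comp (continuous_fst.inner (T.continuous.comp continuous_snd))
  have hexp_int : ∀ x : E, Integrable (fun y : E => Real.exp ⟪x, T y⟫) ν := by
    intro x
    refine (integrable_const (Real.exp (‖x‖ * ‖T‖))).mono'
      ((Real.continuous_exp.comp ((continuous_const.inner
        (T.continuous.comp continuous_id)))).aestronglyMeasurable) ?_
    filter_upwards [hae] with y hy
    rw [Real.norm_eq_abs, Real.abs_exp, Real.exp_le_exp]
    calc (⟪x, T y⟫ : ℝ) ≤ ‖x‖ * ‖T y‖ := real_inner_le_norm _ _
      _ ≤ ‖x‖ * (‖T‖ * ‖y‖) := by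
          exact mul_le_mul_of_nonneg_left (T.le_opNorm y) (norm_nonneg x)
      _ = ‖x‖ * ‖T‖ := by rw [hy, mul_one]
  have tangent : ∀ t : ℝ, Real.exp lam * (1 + (t - lam)) ≤ Real.exp t := by
    intro t
    have h1 : (t - lam) + 1 ≤ Real.exp (t - lam) := Real.add_one_le_exp _
    have h2 : Real.exp lam * ((t - lam) + 1) ≤ Real.exp lam * Real.exp (t - lam) :=
      mul_le_mul_of_nonneg_left h1 (Real.exp_pos lam).le
    rw [← Real.exp_add] at h2
    calc Real.exp lam * (1 + (t - lam)) = Real.exp lam * ((t - lam) + 1) := by ring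
      _ ≤ Real.exp (lam + (t - lam)) := h2
      _ = Real.exp t := by ring_nf
  have hlin_int : ∀ x : E, Integrable (fun y : E => Real.exp lam * (1 + ((⟪x, T y⟫ : ℝ) - lam))) ν := by
    intro x
    exact (((integrable_const (1:ℝ)).add ((hinner_int x).sub (integrable_const lam))).const_mul _)
  have key : ∀ x : E, Real.exp lam * (1 + ((⟪x, T m⟫ : ℝ) - lam)) ≤ ∫ y, Real.exp ⟪x, T y⟫ ∂ν := by
    intro x
    have h1 : ∫ y, Real.exp lam * (1 + ((⟪x, T y⟫ : ℝ) - lam)) ∂ν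
        = Real.exp lam * (1 + ((⟪x, T m⟫ : ℝ) - lam)) := by
      rw [integral_const_mul]
      congr 1
      have hfun : (fun y : E => (1:ℝ) + ((⟪x, T y⟫ : ℝ) - lam))
          = fun y : E => ((1:ℝ) - lam) + (⟪x, T y⟫ : ℝ) := by funext y; ring
      rw [hfun, integral_add (integrable_const _) (hinner_int x), integral_const, hinner_eq x]
      simp [measure_univ]
      ring
    rw [← h1]
    exact integral_mono (hlin_int x) (hexp_int x) fun y => tangent _
  have hF_meas : AEStronglyMeasurable (fun x : E => ∫ y, Real.exp ⟪x, T y⟫ ∂ν) ν :=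
    (hcont.stronglyMeasurable.integral_prod_right').aestronglyMeasurable
  have hF_int : Integrable (fun x : E => ∫ y, Real.exp ⟪x, T y⟫ ∂ν) ν := by
    refine (integrable_const (Real.exp ‖T‖)).mono' hF_meas ?_
    filter_upwards [hae] with x hx
    have hb : ∀ᵐ y ∂ν, ‖Real.exp ⟪x, T y⟫‖ ≤ Real.exp ‖T‖ := by
      filter_upwards [hae] with y hy
      rw [Real.norm_eq_abs, Real.abs_exp, Real.exp_le_exp]
      calc (⟪x, T y⟫ : ℝ) ≤ ‖x‖ * ‖T y‖ := real_inner_le_norm _ _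
        _ ≤ ‖x‖ * (‖T‖ * ‖y‖) := mul_le_mul_of_nonneg_left (T.le_opNorm y) (norm_nonneg x)
        _ = ‖T‖ := by rw [hx, hy]; ring
    have h := norm_integral_le_of_norm_le (integrable_const (Real.exp ‖T‖)) hb
    rw [integral_const, probReal_univ, one_smul] at h
    exact h
  have hG_int : Integrable (fun x : E => Real.exp lam * (1 + ((⟪x, T m⟫ : ℝ) - lam))) ν := by
    have h1 : Integrable (fun x : E => (⟪x, T m⟫ : ℝ)) ν := by
      have := (innerSL ℝ (T m)).integrable_comp hid
      have h2 : (fun x : E => (innerSL ℝ (T m)) x) = fun x : E => (⟪x, T m⟫ : ℝ) := by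
        funext x; rw [innerSL_apply_apply]; exact real_inner_comm _ _
      rwa [h2] at this
    exact (((integrable_const (1:ℝ)).add (h1.sub (integrable_const lam))).const_mul _)
  have hG_eq : ∫ x, Real.exp lam * (1 + ((⟪x, T m⟫ : ℝ) - lam)) ∂ν
      = Real.exp lam * (1 + ((⟪m, T m⟫ : ℝ) - lam)) := by
    have h1 : Integrable (fun x : E => (⟪x, T m⟫ : ℝ)) ν := by
      have := (innerSL ℝ (T m)).integrable_comp hid
      have h2 : (fun x : E => (innerSL ℝ (T m)) x) = fun x : E => (⟪x, T m⟫ : ℝ) := by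
        funext x; rw [innerSL_apply_apply]; exact real_inner_comm _ _
      rwa [h2] at this
    rw [integral_const_mul]
    congr 1
    have h3 : ∫ x, (⟪x, T m⟫ : ℝ) ∂ν = ⟪m, T m⟫ := by
      have h4 : ∫ x, (⟪x, T m⟫ : ℝ) ∂ν = ∫ x, (⟪T m, x⟫ : ℝ) ∂ν := by
        congr 1; funext x; exact real_inner_comm _ _
      rw [h4, integral_inner hid (T m), ← hm, real_inner_comm]
    have hfun : (fun x : E => (1:ℝ) + ((⟪x, T m⟫ : ℝ) - lam))
        = fun x : E => ((1:ℝ) - lam) + (⟪x, T m⟫ : ℝ) := by funext y; ring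
    rw [hfun, integral_add (integrable_const _) h1, integral_const, h3]
    simp [measure_univ]
    ring
  calc Real.exp lam * (1 + ((⟪m, Matrix.toEuclideanLin D m⟫ : ℝ) - lam))
      = ∫ x, Real.exp lam * (1 + ((⟪x, T m⟫ : ℝ) - lam)) ∂ν := by rw [hG_eq, hTeq]
    _ ≤ ∫ x, ∫ y, Real.exp ⟪x, T y⟫ ∂ν ∂ν := integral_mono hG_int hF_int fun x => key x
    _ = energy D ν := rfl

lemma rayleigh_ge (D : Matrix (Fin n) (Fin n) ℝ) (hD : D.IsSymm) (lamMin : ℝ)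
    (hlam : IsEigenvalue D lamMin) (hmin : ∀ l : ℝ, IsEigenvalue D l → lamMin ≤ l)
    (v : E) : lamMin * ‖v‖ ^ 2 ≤ ⟪v, Matrix.toEuclideanLin D v⟫ := by
  obtain ⟨v₀, hv₀, hev₀⟩ := hlam
  haveI : Nontrivial E := nontrivial_of_ne v₀ 0 hv₀
  have hherm : D.IsHermitian := by
    rw [Matrix.IsHermitian, Matrix.conjTranspose_eq_transpose_of_trivial]; exact hD
  have hsym : (Matrix.toEuclideanLin D).IsSymmetric :=
    Matrix.isHermitian_iff_isSymmetric.mp hherm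
  set L := Matrix.toEuclideanLin D with hL
  set T : E →L[ℝ] E := LinearMap.toContinuousLinearMap L with hTdef
  set c : ℝ := ⨅ x : {x : E // x ≠ 0}, RCLike.re (⟪L x, (x : E)⟫ : ℝ) / ‖(x : E)‖ ^ 2 with hc
  have hev : Module.End.HasEigenvalue L (c : ℝ) :=
    hsym.hasEigenvalue_iInf_of_finiteDimensional
  have hlc : lamMin ≤ c := by
    obtain ⟨w, hw⟩ := hev.exists_hasEigenvector
    exact hmin c ⟨w, hw.2, Module.End.mem_eigenspace_iff.mp hw.1⟩
  rcases eq_or_ne v 0 with rfl | hv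
  · simp
  · have hbdd : BddBelow (Set.range fun x : {x : E // x ≠ 0} =>
        RCLike.re (⟪L x, (x : E)⟫ : ℝ) / ‖(x : E)‖ ^ 2) := by
      refine ⟨-‖T‖, ?_⟩
      rintro _ ⟨x, rfl⟩
      have hx : (0 : ℝ) < ‖(x : E)‖ ^ 2 := pow_pos (norm_pos_iff.mpr x.2) 2
      rw [le_div_iff₀ hx]
      have h1 : |(⟪L x, (x : E)⟫ : ℝ)| ≤ ‖T‖ * ‖(x : E)‖ ^ 2 := by
        calc |(⟪L x, (x : E)⟫ : ℝ)| ≤ ‖L x‖ * ‖(x : E)‖ := abs_real_inner_le_norm _ _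
          _ = ‖T (x : E)‖ * ‖(x : E)‖ := rfl
          _ ≤ (‖T‖ * ‖(x : E)‖) * ‖(x : E)‖ :=
              mul_le_mul_of_nonneg_right (T.le_opNorm _) (norm_nonneg _)
          _ = ‖T‖ * ‖(x : E)‖ ^ 2 := by ring
      have h2 : -(‖T‖ * ‖(x : E)‖ ^ 2) ≤ (⟪L x, (x : E)⟫ : ℝ) := neg_le_of_abs_le h1
      simpa [RCLike.re_to_real] using h2.trans_eq' (by ring)
    have hcle : c ≤ RCLike.re (⟪L v, v⟫ : ℝ) / ‖v‖ ^ 2 := ciInf_le hbdd ⟨v, hv⟩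
    have hvp : (0 : ℝ) < ‖v‖ ^ 2 := pow_pos (norm_pos_iff.mpr hv) 2
    have : lamMin ≤ (⟪L v, v⟫ : ℝ) / ‖v‖ ^ 2 := by
      refine hlc.trans ?_
      simpa [RCLike.re_to_real] using hcle
    rw [le_div_iff₀ hvp] at this
    calc lamMin * ‖v‖ ^ 2 ≤ (⟪L v, v⟫ : ℝ) := this
      _ = ⟪v, L v⟫ := real_inner_comm _ _

lemma eigen_of_min (D : Matrix (Fin n) (Fin n) ℝ) (hD : D.IsSymm) (lamMin : ℝ)
    (hlam : IsEigenvalue D lamMin) (hmin : ∀ l : ℝ, IsEigenvalue D l → lamMin ≤ l)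
    (m : E) (hm : ‖m‖ = 1) (heq : (⟪m, Matrix.toEuclideanLin D m⟫ : ℝ) = lamMin) :
    Matrix.toEuclideanLin D m = lamMin • m := by
  have hherm : D.IsHermitian := by
    rw [Matrix.IsHermitian, Matrix.conjTranspose_eq_transpose_of_trivial]; exact hD
  have hsym : (Matrix.toEuclideanLin D).IsSymmetric :=
    Matrix.isHermitian_iff_isSymmetric.mp hherm
  set L := Matrix.toEuclideanLin D with hL
  set T : E →L[ℝ] E := LinearMap.toContinuousLinearMap L with hTdef
  have hm0 : m ≠ 0 := by
    intro h; rw [h] at hm; simp at hm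
  have hsa : IsSelfAdjoint T := by
    rw [ContinuousLinearMap.isSelfAdjoint_iff_isSymmetric]
    exact hsym
  have hminOn : IsMinOn T.reApplyInnerSelf (Metric.sphere (0 : E) ‖m‖) m := by
    intro x hx
    have hx1 : ‖x‖ = ‖m‖ := by simpa [mem_sphere_zero_iff_norm] using hx
    have hray := rayleigh_ge D hD lamMin hlam hmin x
    have h1 : T.reApplyInnerSelf m = lamMin := by
      simp only [ContinuousLinearMap.reApplyInnerSelf, RCLike.re_to_real]
      rw [real_inner_comm]
      exact heq
    have h2 : lamMin ≤ T.reApplyInnerSelf x := by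
      simp only [ContinuousLinearMap.reApplyInnerSelf, RCLike.re_to_real]
      rw [real_inner_comm]
      calc lamMin = lamMin * ‖x‖ ^ 2 := by rw [hx1, hm]; ring
        _ ≤ ⟪x, L x⟫ := hray
    simp only [Set.mem_setOf_eq, h1]
    exact h2
  have hev := hsa.hasEigenvector_of_isMinOn hm0 hminOn
  have heig : L m = (⨅ x : {x : E // x ≠ 0}, T.rayleighQuotient x) • m :=
    Module.End.mem_eigenspace_iff.mp hev.1
  have hval : (⨅ x : {x : E // x ≠ 0}, T.rayleighQuotient x) = lamMin := by
    have h1 : (⟪m, L m⟫ : ℝ) = (⨅ x : {x : E // x ≠ 0}, T.rayleighQuotient x) * ‖m‖ ^ 2 := by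
      rw [heig, real_inner_smul_right, real_inner_self_eq_norm_sq]
    rw [hm] at h1
    rw [heq] at h1
    linarith [h1]
  rw [hval] at heig
  exact heig

lemma energy_dirac (D : Matrix (Fin n) (Fin n) ℝ) (z : E) :
    energy D (Measure.dirac z) = Real.exp ⟪z, Matrix.toEuclideanLin D z⟫ := by
  simp [energy, integral_dirac]

lemma eq_dirac_of_ae (ν : Measure E) [IsProbabilityMeasure ν] (m : E)
    (h : ∀ᵐ x ∂ν, x = m) : ν = Measure.dirac m := by
  have h0 : ν {x : E | ¬ x = m} = 0 := ae_iff.mp h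
  ext s hs
  rw [Measure.dirac_apply' _ hs]
  by_cases hm : m ∈ s
  · rw [Set.indicator_of_mem hm]
    have hsub : sᶜ ⊆ {x : E | ¬ x = m} := by
      intro x hx
      simp only [Set.mem_setOf_eq]
      rintro rfl
      exact hx hm
    have : ν sᶜ = 0 := measure_mono_null hsub h0
    rw [prob_compl_eq_zero_iff hs] at this
    simp [this]
  · rw [Set.indicator_of_notMem hm]
    have hsub : s ⊆ {x : E | ¬ x = m} := by
      intro x hx
      simp only [Set.mem_setOf_eq]
      rintro rfl
      exact hm hx
    exact measure_mono_null hsub h0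

end Aux

theorem stmt5 {n : ℕ} (D : Matrix (Fin n) (Fin n) ℝ) (hD : D.IsSymm)
    (lamMin : ℝ) (hlam : IsEigenvalue D lamMin)
    (hmin : ∀ l : ℝ, IsEigenvalue D l → lamMin ≤ l)
    (hneg : lamMin < 0)
    (μ : Measure (EuclideanSpace ℝ (Fin n))) [IsProbabilityMeasure μ]
    (hμ : μ (Metric.sphere (0 : EuclideanSpace ℝ (Fin n)) 1) = 1) :
    (∀ ν : Measure (EuclideanSpace ℝ (Fin n)), IsProbabilityMeasure ν →
      ν (Metric.sphere (0 : EuclideanSpace ℝ (Fin n)) 1) = 1 →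
      energy D μ ≤ energy D ν) ↔
    (∃ z : EuclideanSpace ℝ (Fin n), ‖z‖ = 1 ∧
      Matrix.toEuclideanLin D z = lamMin • z ∧ μ = Measure.dirac z) := by
  have hL := hlam
  constructor
  · intro hopt
    obtain ⟨v₀, hv₀, hev₀⟩ := hL
    set z₀ : EuclideanSpace ℝ (Fin n) := (‖v₀‖⁻¹ : ℝ) • v₀ with hz₀def
    have hz₀ : ‖z₀‖ = 1 := norm_smul_inv_norm hv₀
    have hez₀ : Matrix.toEuclideanLin D z₀ = lamMin • z₀ := by
      rw [hz₀def, LinearMap.map_smul, hev₀, smul_comm]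
    have hz₀sphere : (Measure.dirac z₀) (Metric.sphere (0 : EuclideanSpace ℝ (Fin n)) 1) = 1 := by
      rw [Measure.dirac_apply' _ Metric.isClosed_sphere.measurableSet,
        Set.indicator_of_mem (by simpa [mem_sphere_zero_iff_norm] using hz₀)]
      rfl
    have hiz₀ : (⟪z₀, Matrix.toEuclideanLin D z₀⟫ : ℝ) = lamMin := by
      rw [hez₀, real_inner_smul_right, real_inner_self_eq_norm_sq, hz₀]
      ring
    have h1 : energy D μ ≤ Real.exp lamMin := by
      have := hopt (Measure.dirac z₀) inferInstance hz₀sphere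
      rwa [energy_dirac, hiz₀] at this
    set m : EuclideanSpace ℝ (Fin n) := ∫ x, x ∂μ with hm
    have h2 := energy_ge D μ hμ lamMin
    have hmn : ‖m‖ ≤ 1 := aux_norm_integral_le μ hμ
    have hray := rayleigh_ge D hD lamMin ⟨v₀, hv₀, hev₀⟩ hmin m
    have hip_le : (⟪m, Matrix.toEuclideanLin D m⟫ : ℝ) ≤ lamMin := by
      nlinarith [Real.exp_pos lamMin, h1, h2]
    have hnsq : 1 ≤ ‖m‖ ^ 2 := by nlinarith
    have hnorm : ‖m‖ = 1 := le_antisymm hmn (by nlinarith [hnsq, norm_nonneg m])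
    have heq : (⟪m, Matrix.toEuclideanLin D m⟫ : ℝ) = lamMin := by
      refine le_antisymm hip_le ?_
      calc lamMin = lamMin * ‖m‖ ^ 2 := by rw [hnorm]; ring
        _ ≤ ⟪m, Matrix.toEuclideanLin D m⟫ := hray
    have heig := eigen_of_min D hD lamMin ⟨v₀, hv₀, hev₀⟩ hmin m hnorm heq
    -- show μ = dirac m
    have hid := aux_int_id μ hμ
    have hae := aux_ae_norm μ hμ
    have hι : ∫ x, (⟪m, x⟫ : ℝ) ∂μ = 1 := by
      rw [integral_inner hid m, ← hm, real_inner_self_eq_norm_sq, hnorm]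
      ring
    have hint1 : Integrable (fun x : EuclideanSpace ℝ (Fin n) => 1 - (⟪m, x⟫ : ℝ)) μ := by
      have := (innerSL ℝ m).integrable_comp hid
      exact (integrable_const 1).sub (by simpa using this)
    have hnn : ∀ᵐ x ∂μ, 0 ≤ 1 - (⟪m, x⟫ : ℝ) := by
      filter_upwards [hae] with x hx
      have := real_inner_le_norm m x
      rw [hnorm, hx] at this
      linarith
    have hzero : ∫ x, (1 - (⟪m, x⟫ : ℝ)) ∂μ = 0 := by
      rw [integral_sub (integrable_const 1) (by
        have := (innerSL ℝ m).integrable_comp hid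
        simpa using this), hι]
      simp
    have hae0 := (integral_eq_zero_iff_of_nonneg_ae hnn hint1).mp hzero
    have haem : ∀ᵐ x ∂μ, x = m := by
      have hae0' : ∀ᵐ x ∂μ, (1 - (⟪m, x⟫ : ℝ)) = 0 := hae0
      filter_upwards [hae0', hae] with x h1' h2'
      have hin : (⟪x, m⟫ : ℝ) = 1 := by
        rw [real_inner_comm]; linarith
      have hsq : ‖x - m‖ ^ 2 = 0 := by
        rw [norm_sub_sq_real, hin, h2', hnorm]
        ring
      have : x - m = 0 := by
        rw [← norm_eq_zero]
        exact pow_eq_zero_iff (by norm_num) |>.mp hsq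
      exact sub_eq_zero.mp this
    exact ⟨m, hnorm, heig, eq_dirac_of_ae μ m haem⟩
  · rintro ⟨z, hz, hez, rfl⟩
    intro ν hνp hνs
    haveI := hνp
    have hiz : (⟪z, Matrix.toEuclideanLin D z⟫ : ℝ) = lamMin := by
      rw [hez, real_inner_smul_right, real_inner_self_eq_norm_sq, hz]
      ring
    rw [energy_dirac, hiz]
    have h2 := energy_ge D ν hνs lamMin
    set mv : EuclideanSpace ℝ (Fin n) := ∫ x, x ∂ν with hmv
    have hray := rayleigh_ge D hD lamMin hlam hmin mv
    have hmn : ‖mv‖ ≤ 1 := aux_norm_integral_le ν hνs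
    have hs : ‖mv‖ ^ 2 ≤ 1 := by nlinarith [hmn, norm_nonneg mv]
    have hip : lamMin ≤ (⟪mv, Matrix.toEuclideanLin D mv⟫ : ℝ) := by
      nlinarith [hray, hs, hneg]
    nlinarith [Real.exp_pos lamMin, h2, hip,
      mul_nonneg (Real.exp_pos lamMin).le
        (sub_nonneg.mpr hip)]
end

section
/- Let D be a symmetric positive semi-definite n×n matrix with nontrivial null space N(D) ∩ S^{n-1} ≠ ∅ (so smallest eigenvalue 0). A probability measure μ on the unit sphere minimizes the energy E(μ) = ∬ exp(⟪x, D y⟫) dμ(x) dμ(y) if and only if μ is concentrated on the null space of D; in that case E(μ) = 1. -/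
open MeasureTheory RealInnerProductSpace

namespace Stmt6Aux

open Matrix

lemma cubic_le_exp (t : ℝ) : 1 + t + t^2/2 + t^3/6 ≤ Real.exp t := by
  rcases le_or_gt 0 t with h | h
  · have h4 := Real.sum_le_exp_of_nonneg h 4
    have : ∑ i ∈ Finset.range 4, t ^ i / i.factorial = 1 + t + t^2/2 + t^3/6 := by
      simp [Finset.sum_range_succ, Nat.factorial]
    linarith [this ▸ h4]
  · have hd1 : ∀ s : ℝ, HasDerivAt (fun u : ℝ => Real.exp u - (1 + u + u^2/2))
        (Real.exp s - (1 + s)) s := by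
      intro s
      have h := (Real.hasDerivAt_exp s).sub
        (((hasDerivAt_id s).const_add 1).add ((hasDerivAt_pow 2 s).div_const 2))
      refine h.congr_deriv ?_
      simp
    have mono1 : Monotone (fun u : ℝ => Real.exp u - (1 + u + u^2/2)) := by
      apply monotone_of_deriv_nonneg
      · exact fun s => (hd1 s).differentiableAt
      · intro s
        rw [(hd1 s).deriv]
        have := Real.add_one_le_exp s
        linarith
    have hg1le : ∀ s : ℝ, s ≤ 0 → Real.exp s - (1 + s + s^2/2) ≤ 0 := by
      intro s hs
      have := mono1 hs
      simp [Real.exp_zero] at this ⊢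
      linarith
    have hd : ∀ s : ℝ, HasDerivAt (fun u : ℝ => Real.exp u - (1 + u + u^2/2 + u^3/6))
        (Real.exp s - (1 + s + s^2/2)) s := by
      intro s
      have h := (Real.hasDerivAt_exp s).sub
        ((((hasDerivAt_id s).const_add 1).add ((hasDerivAt_pow 2 s).div_const 2)).add
          ((hasDerivAt_pow 3 s).div_const 6))
      refine h.congr_deriv ?_
      simp
      ring
    have anti : AntitoneOn (fun u : ℝ => Real.exp u - (1 + u + u^2/2 + u^3/6)) (Set.Iic 0) := by
      apply antitoneOn_of_deriv_nonpos (convex_Iic 0)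
      · exact (Continuous.continuousOn (by continuity))
      · intro s hs
        exact (hd s).differentiableAt.differentiableWithinAt
      · intro s hs
        rw [(hd s).deriv]
        exact hg1le s (le_of_lt (by simpa using hs))
    have := anti (Set.mem_Iic.2 h.le) (Set.mem_Iic.2 le_rfl) h.le
    simp [Real.exp_zero] at this
    linarith

section Aux

variable {n : ℕ} {μ : Measure (EuclideanSpace ℝ (Fin n))} [IsProbabilityMeasure μ]

omit [IsProbabilityMeasure μ] in
lemma inner_int {ι : Type*} [Fintype ι] (g : ι → EuclideanSpace ℝ (Fin n) → ℝ)
    (hg : ∀ i, Integrable (g i) μ) (x : EuclideanSpace ℝ (Fin n)) :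
    ∫ y, ∑ i, g i x * g i y ∂μ = ∑ i, g i x * (∫ y, g i y ∂μ) := by
  rw [integral_finset_sum]
  · exact Finset.sum_congr rfl fun i _ => integral_const_mul _ _
  · exact fun i _ => (hg i).const_mul _

omit [IsProbabilityMeasure μ] in
lemma outer_int {ι : Type*} [Fintype ι] (g : ι → EuclideanSpace ℝ (Fin n) → ℝ)
    (hg : ∀ i, Integrable (g i) μ) (c : ι → ℝ) :
    ∫ x, ∑ i, g i x * c i ∂μ = ∑ i, (∫ x, g i x ∂μ) * c i := by
  rw [integral_finset_sum]
  · exact Finset.sum_congr rfl fun i _ => integral_mul_const _ _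
  · exact fun i _ => (hg i).mul_const _

lemma sq_expand (a b : Fin n → ℝ) :
    (∑ i, a i * b i)^2 = ∑ p : Fin n × Fin n, (a p.1 * a p.2) * (b p.1 * b p.2) := by
  rw [sq, Finset.sum_mul_sum, ← Finset.sum_product']
  exact Finset.sum_congr rfl fun p _ => by ring

lemma cube_expand (a b : Fin n → ℝ) :
    (∑ i, a i * b i)^3 = ∑ p : (Fin n × Fin n) × Fin n,
      (a p.1.1 * a p.1.2 * a p.2) * (b p.1.1 * b p.1.2 * b p.2) := by
  rw [pow_succ, sq_expand, Finset.sum_mul_sum, ← Finset.sum_product']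
  exact Finset.sum_congr rfl fun p _ => by ring

lemma inner_mulVec (M : Matrix (Fin n) (Fin n) ℝ) (x y : EuclideanSpace ℝ (Fin n)) :
    ⟪x, Matrix.toEuclideanLin M y⟫ = (fun j => x j) ⬝ᵥ (M *ᵥ (fun j => y j)) := by
  rw [PiLp.inner_apply]
  simp [Matrix.toEuclideanLin_apply, dotProduct]
  exact Finset.sum_congr rfl fun i _ => mul_comm _ _

lemma inner_factor (B D : Matrix (Fin n) (Fin n) ℝ) (hBB : B * B = D)
    (hsym : B.transpose = B) (x y : EuclideanSpace ℝ (Fin n)) :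
    ⟪x, Matrix.toEuclideanLin D y⟫
      = ∑ i, (B *ᵥ (fun j => x j)) i * (B *ᵥ (fun j => y j)) i := by
  rw [inner_mulVec, ← hBB, ← Matrix.mulVec_mulVec, Matrix.dotProduct_mulVec]
  nth_rewrite 1 [← hsym]
  rw [Matrix.vecMul_transpose]
  rfl

lemma abs_coord_le (x : EuclideanSpace ℝ (Fin n)) (j : Fin n) : |x j| ≤ ‖x‖ := by
  rw [EuclideanSpace.norm_eq]
  calc |x j| = Real.sqrt (‖x j‖^2) := by rw [Real.sqrt_sq_eq_abs]; simp [Real.norm_eq_abs]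
  _ ≤ _ := Real.sqrt_le_sqrt (Finset.single_le_sum (f := fun i => ‖x i‖^2)
      (fun i _ => sq_nonneg _) (Finset.mem_univ j))

lemma ae_sphere (hμ : μ (Metric.sphere (0 : EuclideanSpace ℝ (Fin n)) 1) = 1) :
    ∀ᵐ x ∂μ, ‖x‖ = 1 := by
  have h : μ (Metric.sphere (0 : EuclideanSpace ℝ (Fin n)) 1)ᶜ = 0 := by
    rw [measure_compl (Metric.isClosed_sphere).measurableSet (measure_ne_top _ _), hμ,
      measure_univ]
    simp
  have h2 : ∀ᵐ x ∂μ, x ∈ Metric.sphere (0 : EuclideanSpace ℝ (Fin n)) 1 := mem_ae_iff.2 h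
  filter_upwards [h2] with x hx
  simpa [Metric.mem_sphere, dist_zero_right] using hx

lemma int_of_bdd {f : EuclideanSpace ℝ (Fin n) → ℝ} (hf : Continuous f) (C : ℝ)
    (hμ : μ (Metric.sphere (0 : EuclideanSpace ℝ (Fin n)) 1) = 1)
    (hC : ∀ x : EuclideanSpace ℝ (Fin n), ‖x‖ = 1 → |f x| ≤ C) : Integrable f μ := by
  refine (integrable_const C).mono' hf.aestronglyMeasurable ?_
  filter_upwards [ae_sphere hμ] with x hx
  simpa using hC x hx

lemma cont_a (B : Matrix (Fin n) (Fin n) ℝ) (i : Fin n) :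
    Continuous (fun x : EuclideanSpace ℝ (Fin n) => (B *ᵥ (fun j => x j)) i) := by
  simp only [Matrix.mulVec, dotProduct]
  exact continuous_finset_sum _ fun j _ => (continuous_const.mul (by fun_prop))

lemma bdd_a (B : Matrix (Fin n) (Fin n) ℝ) (i : Fin n) (x : EuclideanSpace ℝ (Fin n))
    (hx : ‖x‖ = 1) : |(B *ᵥ (fun j => x j)) i| ≤ ∑ k, ∑ j, |B k j| := by
  simp only [Matrix.mulVec, dotProduct]
  calc |∑ j, B i j * x j| ≤ ∑ j, |B i j * x j| := Finset.abs_sum_le_sum_abs _ _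
  _ ≤ ∑ j, |B i j| := by
      refine Finset.sum_le_sum fun j _ => ?_
      rw [abs_mul]
      nlinarith [abs_coord_le x j, hx, abs_nonneg (B i j), abs_nonneg (x j)]
  _ ≤ _ := Finset.single_le_sum (f := fun k => ∑ j, |B k j|)
      (fun k _ => Finset.sum_nonneg fun j _ => abs_nonneg _) (Finset.mem_univ i)

lemma core {n : ℕ} {μ : Measure (EuclideanSpace ℝ (Fin n))} [IsProbabilityMeasure μ]
    (hμ : μ (Metric.sphere (0 : EuclideanSpace ℝ (Fin n)) 1) = 1)
    (a : EuclideanSpace ℝ (Fin n) → Fin n → ℝ)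
    (hcont : ∀ i, Continuous (fun x => a x i)) (K : ℝ) (hK0 : 0 ≤ K)
    (haK : ∀ x : EuclideanSpace ℝ (Fin n), ‖x‖ = 1 → ∀ i, |a x i| ≤ K) :
    1 + (∑ p : Fin n × Fin n, (∫ x, a x p.1 * a x p.2 ∂μ)^2)/2
      ≤ ∫ x, ∫ y, Real.exp (∑ i, a x i * a y i) ∂μ ∂μ := by
  classical
  set g1 : Fin n → EuclideanSpace ℝ (Fin n) → ℝ := fun i x => a x i with hg1def
  set g2 : Fin n × Fin n → EuclideanSpace ℝ (Fin n) → ℝ := fun p x => a x p.1 * a x p.2 with hg2def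
  set g3 : (Fin n × Fin n) × Fin n → EuclideanSpace ℝ (Fin n) → ℝ :=
    fun p x => a x p.1.1 * a x p.1.2 * a x p.2 with hg3def
  have hg1c : ∀ i, Continuous (g1 i) := hcont
  have hg2c : ∀ p, Continuous (g2 p) := fun p => (hcont p.1).mul (hcont p.2)
  have hg3c : ∀ p, Continuous (g3 p) := fun p => ((hcont p.1.1).mul (hcont p.1.2)).mul (hcont p.2)
  have int1 : ∀ i, Integrable (g1 i) μ := fun i =>
    int_of_bdd (hg1c i) K hμ (fun x hx => haK x hx i)
  have int2 : ∀ p, Integrable (g2 p) μ := fun p =>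
    int_of_bdd (hg2c p) (K * K) hμ (fun x hx => by
      rw [show g2 p x = a x p.1 * a x p.2 from rfl, abs_mul]
      exact mul_le_mul (haK x hx p.1) (haK x hx p.2) (abs_nonneg _) hK0)
  have int3 : ∀ p, Integrable (g3 p) μ := fun p =>
    int_of_bdd (hg3c p) (K * K * K) hμ (fun x hx => by
      rw [show g3 p x = a x p.1.1 * a x p.1.2 * a x p.2 from rfl, abs_mul, abs_mul]
      exact mul_le_mul (mul_le_mul (haK x hx p.1.1) (haK x hx p.1.2) (abs_nonneg _) hK0)
        (haK x hx p.2) (abs_nonneg _) (mul_nonneg hK0 hK0))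
  set f : EuclideanSpace ℝ (Fin n) → EuclideanSpace ℝ (Fin n) → ℝ :=
    fun x y => ∑ i, g1 i x * g1 i y with hfdef
  have hsq : ∀ x y, (f x y)^2 = ∑ p, g2 p x * g2 p y := fun x y => sq_expand (a x) (a y)
  have hcube : ∀ x y, (f x y)^3 = ∑ p, g3 p x * g3 p y := fun x y => cube_expand (a x) (a y)
  set c1 : Fin n → ℝ := fun i => ∫ x, g1 i x ∂μ with hc1def
  set c2 : Fin n × Fin n → ℝ := fun p => ∫ x, g2 p x ∂μ with hc2def
  set c3 : (Fin n × Fin n) × Fin n → ℝ := fun p => ∫ x, g3 p x ∂μ with hc3def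
  have hM1 : (0:ℝ) ≤ ∑ i, (c1 i)^2 := Finset.sum_nonneg fun _ _ => sq_nonneg _
  have hM3 : (0:ℝ) ≤ ∑ p, (c3 p)^2 := Finset.sum_nonneg fun _ _ => sq_nonneg _
  have intf : ∀ x, Integrable (fun y => f x y) μ := fun x =>
    integrable_finset_sum _ fun i _ => (int1 i).const_mul _
  have intf2 : ∀ x, Integrable (fun y => (f x y)^2) μ := fun x => by
    have : (fun y => (f x y)^2) = fun y => ∑ p, g2 p x * g2 p y := funext fun y => hsq x y
    rw [this]; exact integrable_finset_sum _ fun p _ => (int2 p).const_mul _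
  have intf3 : ∀ x, Integrable (fun y => (f x y)^3) μ := fun x => by
    have : (fun y => (f x y)^3) = fun y => ∑ p, g3 p x * g3 p y := funext fun y => hcube x y
    rw [this]; exact integrable_finset_sum _ fun p _ => (int3 p).const_mul _
  have intP : ∀ x, Integrable (fun y => 1 + f x y + (f x y)^2/2 + (f x y)^3/6) μ := fun x =>
    (((integrable_const 1).add (intf x)).add ((intf2 x).div_const 2)).add
      ((intf3 x).div_const 6)
  have intE : ∀ x, Integrable (fun y => Real.exp (f x y)) μ := fun x => by
    have hc : Continuous (fun y : EuclideanSpace ℝ (Fin n) => Real.exp (f x y)) := by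
      apply Real.continuous_exp.comp
      exact continuous_finset_sum _ fun i _ => continuous_const.mul (hg1c i)
    refine int_of_bdd hc (Real.exp (∑ i, |a x i| * K)) hμ (fun y hy => ?_)
    rw [abs_of_pos (Real.exp_pos _)]
    apply Real.exp_le_exp.2
    calc f x y ≤ |f x y| := le_abs_self _
    _ ≤ ∑ i, |g1 i x * g1 i y| := Finset.abs_sum_le_sum_abs _ _
    _ ≤ ∑ i, |a x i| * K := Finset.sum_le_sum fun i _ => by
        rw [abs_mul]
        exact mul_le_mul_of_nonneg_left (haK y hy i) (abs_nonneg _)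
  have stepA : ∀ x, ∫ y, (1 + f x y + (f x y)^2/2 + (f x y)^3/6) ∂μ
      ≤ ∫ y, Real.exp (f x y) ∂μ := fun x =>
    integral_mono (intP x) (intE x) (fun y => cubic_le_exp (f x y))
  have hQ : ∀ x, ∫ y, (1 + f x y + (f x y)^2/2 + (f x y)^3/6) ∂μ
      = 1 + (∑ i, g1 i x * c1 i) + (∑ p, g2 p x * c2 p)/2 + (∑ p, g3 p x * c3 p)/6 := by
    intro x
    have i1 : Integrable (fun y => (1:ℝ) + f x y) μ := (integrable_const 1).add (intf x)
    have i2 : Integrable (fun y => 1 + f x y + (f x y)^2/2) μ := i1.add ((intf2 x).div_const 2)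
    have e1 : ∫ y, f x y ∂μ = ∑ i, g1 i x * c1 i := inner_int g1 int1 x
    have e2 : ∫ y, (f x y)^2 ∂μ = ∑ p, g2 p x * c2 p := by
      rw [show (fun y => (f x y)^2) = fun y => ∑ p, g2 p x * g2 p y from funext fun y => hsq x y]
      exact inner_int g2 int2 x
    have e3 : ∫ y, (f x y)^3 ∂μ = ∑ p, g3 p x * c3 p := by
      rw [show (fun y => (f x y)^3) = fun y => ∑ p, g3 p x * g3 p y from funext fun y => hcube x y]
      exact inner_int g3 int3 x
    have d2 : ∫ y, (f x y)^2/2 ∂μ = (∫ y, (f x y)^2 ∂μ)/2 := integral_div _ _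
    have d3 : ∫ y, (f x y)^3/6 ∂μ = (∫ y, (f x y)^3 ∂μ)/6 := integral_div _ _
    calc ∫ y, (1 + f x y + (f x y)^2/2 + (f x y)^3/6) ∂μ
        = (∫ y, (1 + f x y + (f x y)^2/2) ∂μ) + ∫ y, (f x y)^3/6 ∂μ :=
          integral_add i2 ((intf3 x).div_const 6)
      _ = ((∫ y, (1 + f x y) ∂μ) + ∫ y, (f x y)^2/2 ∂μ) + ∫ y, (f x y)^3/6 ∂μ := by
          rw [integral_add i1 ((intf2 x).div_const 2)]
      _ = (((∫ y, (1:ℝ) ∂μ) + ∫ y, f x y ∂μ) + ∫ y, (f x y)^2/2 ∂μ) + ∫ y, (f x y)^3/6 ∂μ := by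
          rw [integral_add (integrable_const 1) (intf x)]
      _ = 1 + (∑ i, g1 i x * c1 i) + (∑ p, g2 p x * c2 p)/2 + (∑ p, g3 p x * c3 p)/6 := by
          rw [integral_const, d2, d3, e1, e2, e3]; simp [measure_univ]
  have intS1 : Integrable (fun x => ∑ i, g1 i x * c1 i) μ :=
    integrable_finset_sum _ fun i _ => (int1 i).mul_const _
  have intS2 : Integrable (fun x => ∑ p, g2 p x * c2 p) μ :=
    integrable_finset_sum _ fun p _ => (int2 p).mul_const _
  have intS3 : Integrable (fun x => ∑ p, g3 p x * c3 p) μ :=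
    integrable_finset_sum _ fun p _ => (int3 p).mul_const _
  have intQ : Integrable (fun x => 1 + (∑ i, g1 i x * c1 i) + (∑ p, g2 p x * c2 p)/2
      + (∑ p, g3 p x * c3 p)/6) μ :=
    (((integrable_const 1).add intS1).add (intS2.div_const 2)).add (intS3.div_const 6)
  have hQint : ∫ x, (1 + (∑ i, g1 i x * c1 i) + (∑ p, g2 p x * c2 p)/2
      + (∑ p, g3 p x * c3 p)/6) ∂μ
      = 1 + (∑ i, (c1 i)^2) + (∑ p, (c2 p)^2)/2 + (∑ p, (c3 p)^2)/6 := by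
    have i1 : Integrable (fun x => (1:ℝ) + ∑ i, g1 i x * c1 i) μ := (integrable_const 1).add intS1
    have i2 : Integrable (fun x => 1 + (∑ i, g1 i x * c1 i) + (∑ p, g2 p x * c2 p)/2) μ :=
      i1.add (intS2.div_const 2)
    have d2 : ∫ x, (∑ p, g2 p x * c2 p)/2 ∂μ = (∫ x, ∑ p, g2 p x * c2 p ∂μ)/2 := integral_div _ _
    have d3 : ∫ x, (∑ p, g3 p x * c3 p)/6 ∂μ = (∫ x, ∑ p, g3 p x * c3 p ∂μ)/6 := integral_div _ _
    calc ∫ x, (1 + (∑ i, g1 i x * c1 i) + (∑ p, g2 p x * c2 p)/2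
        + (∑ p, g3 p x * c3 p)/6) ∂μ
        = (∫ x, (1 + (∑ i, g1 i x * c1 i) + (∑ p, g2 p x * c2 p)/2) ∂μ)
          + ∫ x, (∑ p, g3 p x * c3 p)/6 ∂μ := integral_add i2 (intS3.div_const 6)
      _ = ((∫ x, (1 + ∑ i, g1 i x * c1 i) ∂μ) + ∫ x, (∑ p, g2 p x * c2 p)/2 ∂μ)
          + ∫ x, (∑ p, g3 p x * c3 p)/6 ∂μ := by rw [integral_add i1 (intS2.div_const 2)]
      _ = (((∫ x, (1:ℝ) ∂μ) + ∫ x, (∑ i, g1 i x * c1 i) ∂μ) + ∫ x, (∑ p, g2 p x * c2 p)/2 ∂μ)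
          + ∫ x, (∑ p, g3 p x * c3 p)/6 ∂μ := by rw [integral_add (integrable_const 1) intS1]
      _ = 1 + (∑ i, (c1 i)^2) + (∑ p, (c2 p)^2)/2 + (∑ p, (c3 p)^2)/6 := by
          rw [integral_const, d2, d3, outer_int g1 int1 c1, outer_int g2 int2 c2,
            outer_int g3 int3 c3]
          simp [measure_univ, sq]
          rfl
  calc 1 + (∑ p, (c2 p)^2)/2
      ≤ 1 + (∑ i, (c1 i)^2) + (∑ p, (c2 p)^2)/2 + (∑ p, (c3 p)^2)/6 := by linarith
    _ = ∫ x, (1 + (∑ i, g1 i x * c1 i) + (∑ p, g2 p x * c2 p)/2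
        + (∑ p, g3 p x * c3 p)/6) ∂μ := hQint.symm
    _ ≤ ∫ x, ∫ y, Real.exp (f x y) ∂μ ∂μ := by
        refine integral_mono intQ ?_ (fun x => le_of_eq_of_le (hQ x).symm (stepA x))
        · have hTc : Continuous (fun p : EuclideanSpace ℝ (Fin n) × EuclideanSpace ℝ (Fin n) =>
              Real.exp (f p.1 p.2)) := by
            apply Real.continuous_exp.comp
            exact continuous_finset_sum _ fun i _ =>
              ((hcont i).comp continuous_fst).mul ((hcont i).comp continuous_snd)
          have measA : AEStronglyMeasurable (fun x => ∫ y, Real.exp (f x y) ∂μ) μ :=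
            (hTc.stronglyMeasurable.integral_prod_right').aestronglyMeasurable
          refine (integrable_const (Real.exp (∑ _i : Fin n, K * K))).mono' measA ?_
          filter_upwards [ae_sphere hμ] with x hx
          rw [Real.norm_eq_abs, abs_of_nonneg (integral_nonneg fun y => (Real.exp_pos _).le)]
          calc ∫ y, Real.exp (f x y) ∂μ ≤ ∫ _y, Real.exp (∑ _i : Fin n, K * K) ∂μ := by
                apply integral_mono_ae (intE x) (integrable_const _)
                filter_upwards [ae_sphere hμ] with y hy
                apply Real.exp_le_exp.2
                calc f x y ≤ |f x y| := le_abs_self _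
                _ ≤ ∑ i, |g1 i x * g1 i y| := Finset.abs_sum_le_sum_abs _ _
                _ ≤ ∑ _i : Fin n, K * K := Finset.sum_le_sum fun i _ => by
                    rw [abs_mul]
                    exact mul_le_mul (haK x hx i) (haK y hy i) (abs_nonneg _) hK0
          _ = Real.exp (∑ _i : Fin n, K * K) := by simp [measure_univ]
    _ = _ := rfl

lemma energy_key {n : ℕ} (D : Matrix (Fin n) (Fin n) ℝ) (hD : D.PosSemidef)
    {μ : Measure (EuclideanSpace ℝ (Fin n))} [IsProbabilityMeasure μ]
    (hμ : μ (Metric.sphere (0 : EuclideanSpace ℝ (Fin n)) 1) = 1) :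
    1 ≤ energy D μ ∧
      (energy D μ ≤ 1 → μ {x : EuclideanSpace ℝ (Fin n) | Matrix.toEuclideanLin D x = 0} = 1) := by
  obtain ⟨B, hBB, hsym⟩ : ∃ B : Matrix (Fin n) (Fin n) ℝ, B * B = D ∧ B.transpose = B :=
    by
      open scoped MatrixOrder in
      obtain ⟨X, hX, -, hXX⟩ := CFC.exists_sqrt_of_isSelfAdjoint_of_quasispectrumRestricts
        hD.isHermitian (QuasispectrumRestricts.nnreal_of_nonneg hD.nonneg)
      exact ⟨X, hXX, by
        have := hX.star_eq
        rwa [Matrix.star_eq_conjTranspose, Matrix.conjTranspose_eq_transpose_of_trivial] at this⟩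
  set a : EuclideanSpace ℝ (Fin n) → Fin n → ℝ := fun x => B *ᵥ (fun j => x j) with hadef
  have hcont : ∀ i, Continuous (fun x => a x i) := cont_a B
  set K : ℝ := ∑ k, ∑ j, |B k j| with hK
  have hK0 : 0 ≤ K := Finset.sum_nonneg fun k _ => Finset.sum_nonneg fun j _ => abs_nonneg _
  have haK : ∀ x : EuclideanSpace ℝ (Fin n), ‖x‖ = 1 → ∀ i, |a x i| ≤ K :=
    fun x hx i => bdd_a B i x hx
  have hfac : ∀ x y : EuclideanSpace ℝ (Fin n),
      ⟪x, Matrix.toEuclideanLin D y⟫ = ∑ i, a x i * a y i := inner_factor B D hBB hsym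
  have hen : energy D μ = ∫ x, ∫ y, Real.exp (∑ i, a x i * a y i) ∂μ ∂μ := by
    unfold energy; simp_rw [hfac]
  have hcore := core hμ a hcont K hK0 haK
  have int2 : ∀ p : Fin n × Fin n, Integrable (fun x => a x p.1 * a x p.2) μ := fun p =>
    int_of_bdd ((hcont p.1).mul (hcont p.2)) (K * K) hμ (fun x hx => by
      rw [abs_mul]; exact mul_le_mul (haK x hx p.1) (haK x hx p.2) (abs_nonneg _) hK0)
  have h0 : (0:ℝ) ≤ ∑ p : Fin n × Fin n, (∫ x, a x p.1 * a x p.2 ∂μ)^2 :=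
    Finset.sum_nonneg fun _ _ => sq_nonneg _
  constructor
  · rw [hen]; linarith
  · intro hE
    rw [hen] at hE
    have hM2 : ∑ p : Fin n × Fin n, (∫ x, a x p.1 * a x p.2 ∂μ)^2 = 0 := by linarith
    have hzero : ∀ i, ∫ x, a x i * a x i ∂μ = 0 := by
      intro i
      have h := (Finset.sum_eq_zero_iff_of_nonneg (fun p _ => sq_nonneg _)).1 hM2 (i, i)
        (Finset.mem_univ _)
      exact pow_eq_zero_iff (two_ne_zero) |>.1 h
    have hae : ∀ᵐ x ∂μ, ∀ i, a x i = 0 := by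
      rw [ae_all_iff]
      intro i
      have h := (integral_eq_zero_iff_of_nonneg (fun x => mul_self_nonneg (a x i))
        (int2 (i, i))).1 (hzero i)
      filter_upwards [h] with x hx
      exact mul_self_eq_zero.1 hx
    have hconc : ∀ᵐ x ∂μ, Matrix.toEuclideanLin D x = 0 := by
      filter_upwards [hae] with x hx
      have hax : (B *ᵥ fun j => x j) = 0 := funext hx
      have hDx : D *ᵥ (fun j => x j) = 0 := by
        rw [← hBB, ← Matrix.mulVec_mulVec, hax, Matrix.mulVec_zero]
      ext i
      simpa [Matrix.toEuclideanLin_apply] using congrFun hDx i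
    have hTcont : Continuous (Matrix.toEuclideanLin D : EuclideanSpace ℝ (Fin n) →ₗ[ℝ] _) :=
      LinearMap.continuous_of_finiteDimensional _
    have hmeas : MeasurableSet {x : EuclideanSpace ℝ (Fin n) | Matrix.toEuclideanLin D x = 0} :=
      (isClosed_singleton.preimage hTcont).measurableSet
    rw [← prob_compl_eq_zero_iff hmeas]
    exact ae_iff.1 hconc

lemma energy_conc {n : ℕ} (D : Matrix (Fin n) (Fin n) ℝ)
    {μ : Measure (EuclideanSpace ℝ (Fin n))} [IsProbabilityMeasure μ]
    (hc : μ {x : EuclideanSpace ℝ (Fin n) | Matrix.toEuclideanLin D x = 0} = 1) :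
    energy D μ = 1 := by
  have hTcont : Continuous (Matrix.toEuclideanLin D : EuclideanSpace ℝ (Fin n) →ₗ[ℝ] _) :=
    LinearMap.continuous_of_finiteDimensional _
  have hmeas : MeasurableSet {x : EuclideanSpace ℝ (Fin n) | Matrix.toEuclideanLin D x = 0} :=
    (isClosed_singleton.preimage hTcont).measurableSet
  have hae : ∀ᵐ y ∂μ, Matrix.toEuclideanLin D y = 0 := by
    rw [ae_iff]
    exact (prob_compl_eq_zero_iff hmeas).2 hc
  have hin : ∀ x : EuclideanSpace ℝ (Fin n),
      ∫ y, Real.exp ⟪x, Matrix.toEuclideanLin D y⟫ ∂μ = 1 := by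
    intro x
    calc ∫ y, Real.exp ⟪x, Matrix.toEuclideanLin D y⟫ ∂μ = ∫ _y, (1:ℝ) ∂μ := by
          apply integral_congr_ae
          filter_upwards [hae] with y hy
          rw [hy, inner_zero_right, Real.exp_zero]
    _ = 1 := by simp [measure_univ]
  unfold energy
  simp_rw [hin]
  simp [measure_univ]

lemma energy_dirac {n : ℕ} (D : Matrix (Fin n) (Fin n) ℝ) (z : EuclideanSpace ℝ (Fin n))
    (hz0 : Matrix.toEuclideanLin D z = 0) : energy D (Measure.dirac z) = 1 := by
  unfold energy
  rw [integral_dirac, integral_dirac, hz0, inner_zero_right, Real.exp_zero]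


end Aux

end Stmt6Aux

theorem stmt6 {n : ℕ} (D : Matrix (Fin n) (Fin n) ℝ) (hD : D.PosSemidef)
    (hker : ∃ z : EuclideanSpace ℝ (Fin n), ‖z‖ = 1 ∧ Matrix.toEuclideanLin D z = 0)
    (μ : Measure (EuclideanSpace ℝ (Fin n))) [IsProbabilityMeasure μ]
    (hμ : μ (Metric.sphere (0 : EuclideanSpace ℝ (Fin n)) 1) = 1) :
    ((∀ ν : Measure (EuclideanSpace ℝ (Fin n)), IsProbabilityMeasure ν →
        ν (Metric.sphere (0 : EuclideanSpace ℝ (Fin n)) 1) = 1 →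
        energy D μ ≤ energy D ν) ↔
      μ {x : EuclideanSpace ℝ (Fin n) | Matrix.toEuclideanLin D x = 0} = 1) ∧
    (μ {x : EuclideanSpace ℝ (Fin n) | Matrix.toEuclideanLin D x = 0} = 1 →
      energy D μ = 1) := by
  obtain ⟨z, hz1, hz0⟩ := hker
  refine ⟨⟨fun hmin => ?_, fun hc ν hν hνs => ?_⟩, fun hc => Stmt6Aux.energy_conc D hc⟩
  · have hdz : (MeasureTheory.Measure.dirac z)
        (Metric.sphere (0 : EuclideanSpace ℝ (Fin n)) 1) = 1 :=
      MeasureTheory.Measure.dirac_apply_of_mem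
        (by simpa [mem_sphere_zero_iff_norm] using hz1)
    have h1 := hmin (MeasureTheory.Measure.dirac z) inferInstance hdz
    rw [Stmt6Aux.energy_dirac D z hz0] at h1
    exact (Stmt6Aux.energy_key D hD hμ).2 h1
  · rw [Stmt6Aux.energy_conc D hc]
    exact (Stmt6Aux.energy_key D hD hνs).1
end

section
/- If D is a symmetric positive semi-definite matrix, then for every finite signed Borel measure ν on the unit sphere of ℝ^n one has ∬ exp(⟪x, D y⟫) dν(x) dν(y) ≥ 0. -/
open MeasureTheory RealInnerProductSpace

noncomputable section Stmt8Aux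

variable {n : ℕ}

local notation "Sph" => Metric.sphere (0 : EuclideanSpace ℝ (Fin n)) 1

namespace Stmt8Aux

lemma integrable_of_continuous {f : Metric.sphere (0 : EuclideanSpace ℝ (Fin n)) 1 → ℝ}
    (hf : Continuous f) (μ : Measure Sph) [IsFiniteMeasure μ] : Integrable f μ := by
  obtain ⟨C, hC⟩ := isCompact_univ.exists_bound_of_continuousOn hf.continuousOn
  exact (integrable_const C).mono' hf.aestronglyMeasurable
    (ae_of_all _ fun x => hC x trivial)

variable {F : Fin n → Metric.sphere (0 : EuclideanSpace ℝ (Fin n)) 1 → ℝ}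

/-- The kernel. -/
def S (F : Fin n → Metric.sphere (0 : EuclideanSpace ℝ (Fin n)) 1 → ℝ)
    (x y : Metric.sphere (0 : EuclideanSpace ℝ (Fin n)) 1) : ℝ := ∑ i, F i x * F i y

/-- Monomial features. -/
def g (F : Fin n → Metric.sphere (0 : EuclideanSpace ℝ (Fin n)) 1 → ℝ) (k : ℕ)
    (α : Fin k → Fin n) (x : Metric.sphere (0 : EuclideanSpace ℝ (Fin n)) 1) : ℝ :=
  ∏ j, F (α j) x

lemma continuous_g (hF : ∀ i, Continuous (F i)) (k : ℕ) (α : Fin k → Fin n) :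
    Continuous (g F k α) :=
  continuous_finset_prod _ fun j _ => hF (α j)

lemma continuous_S (hF : ∀ i, Continuous (F i)) :
    Continuous (fun p : Sph × Sph => S F p.1 p.2) :=
  continuous_finset_sum _ fun i _ =>
    ((hF i).comp continuous_fst).mul ((hF i).comp continuous_snd)

lemma S_pow (x y : Sph) (k : ℕ) :
    S F x y ^ k = ∑ α : Fin k → Fin n, g F k α x * g F k α y := by
  rw [S, Fintype.sum_pow]
  exact Finset.sum_congr rfl fun α _ => by rw [g, g, ← Finset.prod_mul_distrib]

lemma Tk_eq (hF : ∀ i, Continuous (F i)) (μ σ : Measure Sph) [IsFiniteMeasure μ]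
    [IsFiniteMeasure σ] (k : ℕ) :
    (∫ x, ∫ y, S F x y ^ k ∂σ ∂μ)
      = ∑ α : Fin k → Fin n, (∫ x, g F k α x ∂μ) * (∫ y, g F k α y ∂σ) := by
  have inner : ∀ x, ∫ y, S F x y ^ k ∂σ = ∑ α : Fin k → Fin n,
      g F k α x * ∫ y, g F k α y ∂σ := by
    intro x
    simp_rw [S_pow]
    rw [integral_finset_sum _ fun α _ =>
      (integrable_of_continuous (continuous_g hF k α) σ).const_mul _]
    exact Finset.sum_congr rfl fun α _ => integral_const_mul _ _
  simp_rw [inner]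
  rw [integral_finset_sum _ fun α _ =>
    (integrable_of_continuous (continuous_g hF k α) μ).mul_const _]
  exact Finset.sum_congr rfl fun α _ => integral_mul_const _ _

lemma key_k (hF : ∀ i, Continuous (F i)) (μ ρ : Measure Sph) [IsFiniteMeasure μ]
    [IsFiniteMeasure ρ] (k : ℕ) :
    0 ≤ (∫ x, ∫ y, S F x y ^ k ∂μ ∂μ) - (∫ x, ∫ y, S F x y ^ k ∂ρ ∂μ)
      - (∫ x, ∫ y, S F x y ^ k ∂μ ∂ρ) + (∫ x, ∫ y, S F x y ^ k ∂ρ ∂ρ) := by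
  rw [Tk_eq hF μ μ k, Tk_eq hF μ ρ k, Tk_eq hF ρ μ k, Tk_eq hF ρ ρ k,
    ← Finset.sum_sub_distrib, ← Finset.sum_sub_distrib, ← Finset.sum_add_distrib]
  refine Finset.sum_nonneg fun α _ => ?_
  have : (∫ x, g F k α x ∂μ) * (∫ y, g F k α y ∂μ)
      - (∫ x, g F k α x ∂μ) * (∫ y, g F k α y ∂ρ)
      - (∫ x, g F k α x ∂ρ) * (∫ y, g F k α y ∂μ)
      + (∫ x, g F k α x ∂ρ) * (∫ y, g F k α y ∂ρ)
      = ((∫ x, g F k α x ∂μ) - (∫ x, g F k α x ∂ρ)) ^ 2 := by ring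
  rw [this]
  positivity

lemma norm_Spow_div_le {C : ℝ} (hC : ∀ x y : Sph, |S F x y| ≤ C) (k : ℕ) (x y : Sph) :
    ‖S F x y ^ k / k.factorial‖ ≤ C ^ k / k.factorial := by
  rw [norm_div, norm_pow, Real.norm_eq_abs, Real.norm_natCast]
  exact div_le_div_of_nonneg_right (pow_le_pow_left₀ (abs_nonneg _) (hC x y) k)
    (by positivity)

lemma integral_norm_le (σ : Measure Sph) [IsFiniteMeasure σ] {f : Sph → ℝ}
    (hf : Integrable f σ) {c : ℝ} (hfc : ∀ y, ‖f y‖ ≤ c) :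
    ∫ y, ‖f y‖ ∂σ ≤ c * (σ Set.univ).toReal := by
  calc ∫ y, ‖f y‖ ∂σ ≤ ∫ _, c ∂σ := integral_mono hf.norm (integrable_const _) hfc
  _ = (σ Set.univ).toReal • c := by rw [integral_const]; rfl
  _ = c * (σ Set.univ).toReal := by rw [smul_eq_mul, mul_comm]

lemma inner_exp_expand (hF : ∀ i, Continuous (F i)) {C : ℝ}
    (hC : ∀ x y : Sph, |S F x y| ≤ C) (σ : Measure Sph) [IsFiniteMeasure σ] (x : Sph) :
    (∫ y, Real.exp (S F x y) ∂σ)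
      = ∑' k : ℕ, ∫ y, S F x y ^ k / k.factorial ∂σ := by
  have hexp : ∀ y : Sph, Real.exp (S F x y) = ∑' k : ℕ, S F x y ^ k / k.factorial := by
    intro y
    rw [Real.exp_eq_exp_ℝ, NormedSpace.exp_eq_tsum_div]
  simp_rw [hexp]
  refine (integral_tsum_of_summable_integral_norm (fun k => ?_) ?_).symm
  · exact integrable_of_continuous
      ((((continuous_S hF).comp (Continuous.prodMk_right x)).pow k).div_const _) σ
  · refine Summable.of_nonneg_of_le (fun k => integral_nonneg fun y => norm_nonneg _)
      (fun k => ?_) ((Real.summable_pow_div_factorial C).mul_right (σ Set.univ).toReal)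
    exact integral_norm_le σ (integrable_of_continuous
      ((((continuous_S hF).comp (Continuous.prodMk_right x)).pow k).div_const _) σ)
      (fun y => norm_Spow_div_le hC k x y)

lemma integrable_inner_int (hF : ∀ i, Continuous (F i)) {C : ℝ}
    (hC : ∀ x y : Sph, |S F x y| ≤ C) (μ σ : Measure Sph) [IsFiniteMeasure μ]
    [IsFiniteMeasure σ] (k : ℕ) :
    Integrable (fun x => ∫ y, S F x y ^ k / k.factorial ∂σ) μ := by
  have hsm : StronglyMeasurable fun x : Sph => ∫ y, S F x y ^ k / k.factorial ∂σ := by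
    exact (((continuous_S hF).pow k).div_const _).stronglyMeasurable.integral_prod_right'
  refine (integrable_const (C ^ k / k.factorial * (σ Set.univ).toReal)).mono'
    hsm.aestronglyMeasurable (ae_of_all _ fun x => ?_)
  exact norm_integral_le_of_norm_le_const (ae_of_all _ fun y => norm_Spow_div_le hC k x y)

lemma integral_exp_eq (hF : ∀ i, Continuous (F i)) {C : ℝ}
    (hC : ∀ x y : Sph, |S F x y| ≤ C) (μ σ : Measure Sph) [IsFiniteMeasure μ]
    [IsFiniteMeasure σ] :
    (∫ x, ∫ y, Real.exp (S F x y) ∂σ ∂μ)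
      = ∑' k : ℕ, (∫ x, ∫ y, S F x y ^ k ∂σ ∂μ) / k.factorial := by
  simp_rw [inner_exp_expand hF hC σ]
  rw [← integral_tsum_of_summable_integral_norm (integrable_inner_int hF hC μ σ) ?_]
  · refine tsum_congr fun k => ?_
    simp_rw [integral_div]
  · refine Summable.of_nonneg_of_le (fun k => integral_nonneg fun x => norm_nonneg _)
      (fun k => ?_)
      (((Real.summable_pow_div_factorial C).mul_right
        (σ Set.univ).toReal).mul_right (μ Set.univ).toReal)
    refine integral_norm_le μ (integrable_inner_int hF hC μ σ k) (fun x => ?_)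
    exact norm_integral_le_of_norm_le_const (ae_of_all _ fun y => norm_Spow_div_le hC k x y)

lemma summable_A (hF : ∀ i, Continuous (F i)) {C : ℝ}
    (hC : ∀ x y : Sph, |S F x y| ≤ C) (μ σ : Measure Sph) [IsFiniteMeasure μ]
    [IsFiniteMeasure σ] :
    Summable (fun k : ℕ => (∫ x, ∫ y, S F x y ^ k ∂σ ∂μ) / k.factorial) := by
  refine Summable.of_norm_bounded
    (((Real.summable_pow_div_factorial C).mul_right
      (σ Set.univ).toReal).mul_right (μ Set.univ).toReal) (fun k => ?_)
  have h1 : ∀ x : Sph, ‖∫ y, S F x y ^ k ∂σ‖ ≤ C ^ k * (σ Set.univ).toReal := by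
    intro x
    refine norm_integral_le_of_norm_le_const (ae_of_all _ fun y => ?_)
    rw [norm_pow, Real.norm_eq_abs]
    exact pow_le_pow_left₀ (abs_nonneg _) (hC x y) k
  have h2 : ‖∫ x, ∫ y, S F x y ^ k ∂σ ∂μ‖
      ≤ C ^ k * (σ Set.univ).toReal * (μ Set.univ).toReal :=
    norm_integral_le_of_norm_le_const (ae_of_all _ h1)
  rw [norm_div, Real.norm_natCast]
  calc ‖∫ x, ∫ y, S F x y ^ k ∂σ ∂μ‖ / (k.factorial : ℝ)
      ≤ (C ^ k * (σ Set.univ).toReal * (μ Set.univ).toReal) / (k.factorial : ℝ) := by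
        gcongr
    _ = C ^ k / k.factorial * (σ Set.univ).toReal * (μ Set.univ).toReal := by ring

lemma main (hF : ∀ i, Continuous (F i)) (μ ρ : Measure Sph) [IsFiniteMeasure μ]
    [IsFiniteMeasure ρ] :
    0 ≤ (∫ x, ∫ y, Real.exp (S F x y) ∂μ ∂μ) - (∫ x, ∫ y, Real.exp (S F x y) ∂ρ ∂μ)
      - (∫ x, ∫ y, Real.exp (S F x y) ∂μ ∂ρ)
      + (∫ x, ∫ y, Real.exp (S F x y) ∂ρ ∂ρ) := by
  obtain ⟨C, hCb⟩ := isCompact_univ.exists_bound_of_continuousOn (continuous_S hF).continuousOn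
  have hC : ∀ x y : Sph, |S F x y| ≤ C := fun x y => hCb (x, y) trivial
  rw [integral_exp_eq hF hC μ μ, integral_exp_eq hF hC μ ρ, integral_exp_eq hF hC ρ μ,
    integral_exp_eq hF hC ρ ρ]
  have h1 := summable_A hF hC μ μ
  have h2 := summable_A hF hC μ ρ
  have h3 := summable_A hF hC ρ μ
  have h4 := summable_A hF hC ρ ρ
  rw [← Summable.tsum_sub h1 h2, ← Summable.tsum_sub (h1.sub h2) h3, ← Summable.tsum_add ((h1.sub h2).sub h3) h4]
  refine tsum_nonneg fun k => ?_
  have hk := key_k hF μ ρ k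
  have heq : (∫ x, ∫ y, S F x y ^ k ∂μ ∂μ) / k.factorial
      - (∫ x, ∫ y, S F x y ^ k ∂ρ ∂μ) / k.factorial
      - (∫ x, ∫ y, S F x y ^ k ∂μ ∂ρ) / k.factorial
      + (∫ x, ∫ y, S F x y ^ k ∂ρ ∂ρ) / k.factorial
      = ((∫ x, ∫ y, S F x y ^ k ∂μ ∂μ) - (∫ x, ∫ y, S F x y ^ k ∂ρ ∂μ)
        - (∫ x, ∫ y, S F x y ^ k ∂μ ∂ρ) + (∫ x, ∫ y, S F x y ^ k ∂ρ ∂ρ))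
        / k.factorial := by ring
  rw [heq]
  positivity

end Stmt8Aux

end Stmt8Aux

lemma inner_eq {n : ℕ} (B : Matrix (Fin n) (Fin n) ℝ) (hsym : B.transpose = B)
    (x y : EuclideanSpace ℝ (Fin n)) :
    ⟪x, Matrix.toEuclideanLin (B * B) y⟫
      = ∑ i, (∑ j, B i j * x j) * (∑ j, B i j * y j) := by
  have h1 : ⟪x, Matrix.toEuclideanLin (B * B) y⟫
      = dotProduct (fun j => x j) (Matrix.mulVec (B * B) fun j => y j) := by
    simp [PiLp.inner_apply, RCLike.inner_apply, Matrix.toEuclideanLin_apply,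
      dotProduct, Matrix.mulVec, mul_comm]
  have h2 : ∑ i, (∑ j, B i j * x j) * (∑ j, B i j * y j)
      = dotProduct (Matrix.mulVec B fun j => x j) (Matrix.mulVec B fun j => y j) := by
    simp [dotProduct, Matrix.mulVec]
  rw [h1, h2, ← Matrix.mulVec_mulVec, Matrix.dotProduct_mulVec]
  congr 1
  rw [← hsym, Matrix.vecMul_transpose]
  rw [hsym]

theorem stmt8 {n : ℕ} (D : Matrix (Fin n) (Fin n) ℝ) (hD : D.PosSemidef)
    (ν : SignedMeasure (Metric.sphere (0 : EuclideanSpace ℝ (Fin n)) 1)) :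
    0 ≤
      (∫ x, ∫ y, Real.exp ⟪(x : EuclideanSpace ℝ (Fin n)),
          Matrix.toEuclideanLin D (y : EuclideanSpace ℝ (Fin n))⟫
          ∂ν.toJordanDecomposition.posPart ∂ν.toJordanDecomposition.posPart)
      - (∫ x, ∫ y, Real.exp ⟪(x : EuclideanSpace ℝ (Fin n)),
          Matrix.toEuclideanLin D (y : EuclideanSpace ℝ (Fin n))⟫
          ∂ν.toJordanDecomposition.negPart ∂ν.toJordanDecomposition.posPart)
      - (∫ x, ∫ y, Real.exp ⟪(x : EuclideanSpace ℝ (Fin n)),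
          Matrix.toEuclideanLin D (y : EuclideanSpace ℝ (Fin n))⟫
          ∂ν.toJordanDecomposition.posPart ∂ν.toJordanDecomposition.negPart)
      + (∫ x, ∫ y, Real.exp ⟪(x : EuclideanSpace ℝ (Fin n)),
          Matrix.toEuclideanLin D (y : EuclideanSpace ℝ (Fin n))⟫
          ∂ν.toJordanDecomposition.negPart ∂ν.toJordanDecomposition.negPart) := by
  obtain ⟨B, hsym, hBD⟩ : ∃ B : Matrix (Fin n) (Fin n) ℝ, B.transpose = B ∧ B * B = D :=
    by open scoped MatrixOrder in exact ⟨CFC.sqrt D, by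
      rw [← Matrix.conjTranspose_eq_transpose_of_trivial]
      exact (Matrix.nonneg_iff_posSemidef.mp (CFC.sqrt_nonneg D)).1, CFC.sqrt_mul_sqrt_self D hD.nonneg⟩
  subst hBD
  set F : Fin n → Metric.sphere (0 : EuclideanSpace ℝ (Fin n)) 1 → ℝ :=
    fun i x => ∑ j, B i j * (x : EuclideanSpace ℝ (Fin n)) j with hFdef
  have hF : ∀ i, Continuous (F i) := fun i =>
    continuous_finset_sum _ fun j _ =>
      continuous_const.mul ((EuclideanSpace.proj j).continuous.comp continuous_subtype_val)
  have hkey : ∀ x y : Metric.sphere (0 : EuclideanSpace ℝ (Fin n)) 1,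
      ⟪(x : EuclideanSpace ℝ (Fin n)),
        Matrix.toEuclideanLin (B * B) (y : EuclideanSpace ℝ (Fin n))⟫
        = Stmt8Aux.S F x y := fun x y => inner_eq B hsym _ _
  simp_rw [hkey]
  exact Stmt8Aux.main hF _ _
end

section
/- Let D be symmetric positive semi-definite, z a unit eigenvector of D, and H_z(x) = x − 2⟪x,z⟫z the reflection across the hyperplane orthogonal to z. For any probability measure μ on the unit sphere, set μ̃ = (1/2)(μ + (H_z)_# μ). Then E(μ̃) ≤ E(μ), where E(μ) = ∬ exp(⟪x, D y⟫) dμ(x) dμ(y). -/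
open MeasureTheory RealInnerProductSpace ENNReal
open scoped MatrixOrder

lemma ae_mem_of_meas_one {α : Type*} [MeasurableSpace α] (μ : Measure α) [IsProbabilityMeasure μ]
    {s : Set α} (hs : MeasurableSet s) (h : μ s = 1) : ∀ᵐ x ∂μ, x ∈ s := by
  rw [MeasureTheory.ae_iff]
  have := measure_compl hs (measure_ne_top μ s)
  exact (by simpa [h] using this : μ sᶜ = 0)

lemma expand_lemma {α : Type*} [MeasurableSpace α] (μ ν : Measure α) [SFinite μ] [SFinite ν]
    {m k : ℕ} (f g : Fin m → α → ℝ)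
    (hf : ∀ G : Fin k → Fin m, Integrable (fun x => ∏ j, f (G j) x) μ)
    (hg : ∀ G : Fin k → Fin m, Integrable (fun y => ∏ j, g (G j) y) ν) :
    ∫ p, (∑ i, f i p.1 * g i p.2) ^ k ∂(μ.prod ν)
      = ∑ G : Fin k → Fin m, (∫ x, ∏ j, f (G j) x ∂μ) * (∫ y, ∏ j, g (G j) y ∂ν) := by
  have pt : ∀ p : α × α, (∑ i, f i p.1 * g i p.2) ^ k
      = ∑ G : Fin k → Fin m, (∏ j, f (G j) p.1) * (∏ j, g (G j) p.2) := by
    intro p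
    rw [Fintype.sum_pow]
    exact Finset.sum_congr rfl fun G _ => by rw [Finset.prod_mul_distrib]
  simp_rw [pt]
  rw [integral_finset_sum _ (fun G _ => (hf G).mul_prod (hg G))]
  exact Finset.sum_congr rfl fun G _ => integral_prod_mul (fun x => ∏ j, f (G j) x) (fun y => ∏ j, g (G j) y)

lemma hasSum_integral_exp {α : Type*} [MeasurableSpace α] (Θ : Measure α) [IsFiniteMeasure Θ]
    {c : α → ℝ} (hc : AEStronglyMeasurable c Θ) {R : ℝ} (hR0 : 0 ≤ R)
    (hR : ∀ᵐ a ∂Θ, |c a| ≤ R) :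
    HasSum (fun k : ℕ => (k.factorial : ℝ)⁻¹ * ∫ a, c a ^ k ∂Θ) (∫ a, Real.exp (c a) ∂Θ) := by
  have hfac : ∀ k : ℕ, (0:ℝ) < k.factorial := fun k => Nat.cast_pos.mpr k.factorial_pos
  have hpow : ∀ k : ℕ, ∀ᵐ a ∂Θ, ‖c a ^ k‖ ≤ R ^ k := by
    intro k
    filter_upwards [hR] with a ha
    rw [norm_pow]
    exact pow_le_pow_left₀ (norm_nonneg _) (by rwa [Real.norm_eq_abs]) k
  have hb : ∀ k : ℕ, ∀ᵐ a ∂Θ, ‖(k.factorial : ℝ)⁻¹ * c a ^ k‖ ≤ R ^ k / k.factorial := by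
    intro k
    filter_upwards [hpow k] with a ha
    rw [norm_mul, norm_inv, Real.norm_natCast, div_eq_inv_mul]
    exact mul_le_mul_of_nonneg_left ha (by positivity)
  have hmeas : ∀ k : ℕ, AEStronglyMeasurable (fun a => (k.factorial : ℝ)⁻¹ * c a ^ k) Θ :=
    fun k => ((hc.aemeasurable.pow_const k).const_mul _).aestronglyMeasurable
  have hsummable : Summable fun k : ℕ => (Θ Set.univ).toReal * (R ^ k / k.factorial) :=
    (Real.summable_pow_div_factorial R).mul_left _
  have hnormint : ∀ k : ℕ, ‖(k.factorial:ℝ)⁻¹ * ∫ a, c a ^ k ∂Θ‖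
      ≤ (Θ Set.univ).toReal * (R ^ k / k.factorial) := by
    intro k
    have h1 := norm_integral_le_of_norm_le_const (hpow k)
    rw [norm_mul, norm_inv, Real.norm_natCast]
    calc (k.factorial:ℝ)⁻¹ * ‖∫ a, c a ^ k ∂Θ‖
        ≤ (k.factorial:ℝ)⁻¹ * (R ^ k * (Θ Set.univ).toReal) :=
          mul_le_mul_of_nonneg_left h1 (by positivity)
      _ = (Θ Set.univ).toReal * (R ^ k / k.factorial) := by ring
  have hSum : Summable fun k : ℕ => (k.factorial:ℝ)⁻¹ * ∫ a, c a ^ k ∂Θ :=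
    Summable.of_norm_bounded hsummable hnormint
  have hlint : ∑' k : ℕ, ∫⁻ a, ‖(k.factorial:ℝ)⁻¹ * c a ^ k‖₊ ∂Θ ≠ ⊤ := by
    have hle : ∀ k : ℕ, ∫⁻ a, ‖(k.factorial:ℝ)⁻¹ * c a ^ k‖₊ ∂Θ
        ≤ ENNReal.ofReal (R ^ k / k.factorial) * Θ Set.univ := by
      intro k
      calc ∫⁻ a, ‖(k.factorial:ℝ)⁻¹ * c a ^ k‖₊ ∂Θ
          ≤ ∫⁻ _, ENNReal.ofReal (R ^ k / k.factorial) ∂Θ := by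
            refine lintegral_mono_ae ?_
            filter_upwards [hb k] with a ha
            rw [← ENNReal.ofReal_coe_nnreal, coe_nnnorm]
            exact ENNReal.ofReal_le_ofReal ha
        _ = ENNReal.ofReal (R ^ k / k.factorial) * Θ Set.univ := lintegral_const _
    refine ne_top_of_le_ne_top ?_ (ENNReal.tsum_le_tsum hle)
    rw [ENNReal.tsum_mul_right]
    refine ENNReal.mul_ne_top ?_ (measure_ne_top _ _)
    rw [← ENNReal.ofReal_tsum_of_nonneg (fun k => by positivity)
      (Real.summable_pow_div_factorial R)]
    exact ENNReal.ofReal_ne_top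
  have hexp : ∀ a, Real.exp (c a) = ∑' k : ℕ, (k.factorial : ℝ)⁻¹ * c a ^ k := by
    intro a
    rw [Real.exp_eq_exp_ℝ, NormedSpace.exp_eq_tsum ℝ]
    simp [smul_eq_mul]
  have key : ∫ a, Real.exp (c a) ∂Θ = ∑' k : ℕ, (k.factorial:ℝ)⁻¹ * ∫ a, c a ^ k ∂Θ := by
    rw [integral_congr_ae (Filter.Eventually.of_forall hexp), integral_tsum hmeas hlint]
    exact tsum_congr fun k => integral_const_mul _ _
  exact key ▸ hSum.hasSum

section
open Matrix

lemma bridge {n : ℕ} (D : Matrix (Fin n) (Fin n) ℝ) (hD : D.PosSemidef)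
    (x y : EuclideanSpace ℝ (Fin n)) :
    ⟪x, Matrix.toEuclideanLin D y⟫ =
      ∑ i, (∑ j, CFC.sqrt D i j * x j) * (∑ j, CFC.sqrt D i j * y j) := by
  set B := CFC.sqrt D with hBdef
  have hBB : B * B = D := CFC.sqrt_mul_sqrt_self D hD.nonneg
  have hherm := (CFC.sqrt_nonneg D).posSemidef.1
  have hBsym : Matrix.transpose B = B := by
    ext i j
    have := congrFun (congrFun hherm i) j
    simpa [Matrix.conjTranspose_apply] using this
  have h1 : ⟪x, Matrix.toEuclideanLin D y⟫ = ∑ i, x i * (D *ᵥ (y : Fin n → ℝ)) i := by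
    simp only [PiLp.inner_apply, RCLike.inner_apply, Matrix.toEuclideanLin_apply]
    exact Finset.sum_congr rfl fun i _ => by rw [conj_trivial, mul_comm]
  have h2 : ∀ i : Fin n, (∑ j, B i j * x j) = (B *ᵥ (x : Fin n → ℝ)) i := by
    intro i; simp [Matrix.mulVec, dotProduct]
  have h3 : ∀ i : Fin n, (∑ j, B i j * y j) = (B *ᵥ (y : Fin n → ℝ)) i := by
    intro i; simp [Matrix.mulVec, dotProduct]
  simp_rw [h1, h2, h3]
  have h4 : ∑ i, (B *ᵥ (x : Fin n → ℝ)) i * (B *ᵥ (y : Fin n → ℝ)) i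
      = (B *ᵥ (x : Fin n → ℝ)) ⬝ᵥ (B *ᵥ (y : Fin n → ℝ)) := rfl
  have h5 : ∑ i, (x : Fin n → ℝ) i * (D *ᵥ (y : Fin n → ℝ)) i
      = (x : Fin n → ℝ) ⬝ᵥ (D *ᵥ (y : Fin n → ℝ)) := rfl
  rw [h4, h5, Matrix.dotProduct_mulVec, Matrix.dotProduct_mulVec]
  congr 1
  have hDsym : Dᵀ = D := by
    ext i j
    have := congrFun (congrFun hD.1 i) j
    simpa [Matrix.conjTranspose_apply] using this
  rw [← Matrix.mulVec_transpose, ← Matrix.mulVec_transpose, hBsym, hDsym, ← hBB, ← Matrix.mulVec_mulVec]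

end

set_option maxHeartbeats 8000000 in
theorem stmt9 {n : ℕ} (D : Matrix (Fin n) (Fin n) ℝ) (hD : D.PosSemidef)
    (z : EuclideanSpace ℝ (Fin n)) (hz : ‖z‖ = 1)
    (lam : ℝ) (hzeig : Matrix.toEuclideanLin D z = lam • z)
    (μ : Measure (EuclideanSpace ℝ (Fin n))) [IsProbabilityMeasure μ]
    (hμ : μ (Metric.sphere (0 : EuclideanSpace ℝ (Fin n)) 1) = 1)
    (H : EuclideanSpace ℝ (Fin n) → EuclideanSpace ℝ (Fin n))
    (hH : ∀ x, H x = x - (2 * ⟪x, z⟫) • z) :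
    energy D ((2 : ℝ≥0∞)⁻¹ • (μ + Measure.map H μ)) ≤ energy D μ := by
  classical
  have henergy_def : ∀ m : Measure (EuclideanSpace ℝ (Fin n)),
      energy D m = ∫ x, ∫ y, Real.exp ⟪x, Matrix.toEuclideanLin D y⟫ ∂m ∂m := fun m => rfl
  set T := Matrix.toEuclideanLin D with hT
  set B := CFC.sqrt D with hB
  set w : Fin n → EuclideanSpace ℝ (Fin n) → ℝ := fun i x => ∑ j, B i j * x j with hw
  have hbridge : ∀ x y : EuclideanSpace ℝ (Fin n), ⟪x, T y⟫ = ∑ i, w i x * w i y :=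
    fun x y => bridge D hD x y
  have hsymm : ∀ x y : EuclideanSpace ℝ (Fin n), ⟪x, T y⟫ = ⟪y, T x⟫ := by
    intro x y
    rw [hbridge x y, hbridge y x]
    exact Finset.sum_congr rfl fun i _ => mul_comm _ _
  have hzz : ⟪z, z⟫ = (1:ℝ) := by
    rw [real_inner_self_eq_norm_sq, hz]; norm_num
  have hTz : ∀ x : EuclideanSpace ℝ (Fin n), ⟪x, T z⟫ = lam * ⟪x, z⟫ := fun x => by
    rw [hT, hzeig, real_inner_smul_right]
  have hzT : ∀ y : EuclideanSpace ℝ (Fin n), ⟪z, T y⟫ = lam * ⟪y, z⟫ := fun y => by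
    rw [hsymm z y, hTz y]
  have hHinner : ∀ x v : EuclideanSpace ℝ (Fin n), ⟪H x, v⟫ = ⟪x, v⟫ - 2 * ⟪x,z⟫ * ⟪z, v⟫ := by
    intro x v
    rw [hH, inner_sub_left, real_inner_smul_left]
  have hTH : ∀ y : EuclideanSpace ℝ (Fin n), T (H y) = T y - (2 * ⟪y,z⟫ * lam) • z := by
    intro y
    rw [hH y, map_sub, _root_.map_smul, hzeig, smul_smul]
  have key1 : ∀ x y : EuclideanSpace ℝ (Fin n), ⟪H x, T y⟫ = ⟪x, T (H y)⟫ := by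
    intro x y
    rw [hHinner, hTH, inner_sub_right, real_inner_smul_right, hzT]
    ring
  have key2 : ∀ x y : EuclideanSpace ℝ (Fin n), ⟪H x, T (H y)⟫ = ⟪x, T y⟫ := by
    intro x y
    rw [hHinner, hTH, inner_sub_right, inner_sub_right, real_inner_smul_right,
      real_inner_smul_right, hzT, hzz]
    ring
  have hHnorm : ∀ x, ‖H x‖ = ‖x‖ := by
    intro x
    have h2 : ‖H x‖^2 = ‖x‖^2 := by
      rw [← real_inner_self_eq_norm_sq, ← real_inner_self_eq_norm_sq, hHinner, hH x,
        inner_sub_right, inner_sub_right, real_inner_smul_right, real_inner_smul_right,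
        hzz, real_inner_comm z x]
      ring
    nlinarith [norm_nonneg (H x), norm_nonneg x]
  set S := Metric.sphere (0 : EuclideanSpace ℝ (Fin n)) 1 with hSdef
  have hSm : MeasurableSet S := Metric.isClosed_sphere.measurableSet
  have hmemS : ∀ x : EuclideanSpace ℝ (Fin n), x ∈ S ↔ ‖x‖ = 1 := fun x =>
    mem_sphere_zero_iff_norm
  have hHS : ∀ x ∈ S, H x ∈ S := fun x hx => (hmemS _).2 (by rw [hHnorm]; exact (hmemS _).1 hx)
  have hwc : ∀ i, Continuous (w i) := by
    intro i
    refine continuous_finset_sum _ fun j _ => continuous_const.mul ?_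
    exact (EuclideanSpace.proj (𝕜 := ℝ) j).continuous
  have hHc : Continuous H := by
    rw [funext hH]
    fun_prop
  have hHm : Measurable H := hHc.measurable
  have hcC : Continuous fun p : EuclideanSpace ℝ (Fin n) × EuclideanSpace ℝ (Fin n) =>
      (⟪p.1, T p.2⟫ : ℝ) := by
    have : (fun p : EuclideanSpace ℝ (Fin n) × EuclideanSpace ℝ (Fin n) => (⟪p.1, T p.2⟫ : ℝ))
        = fun p => ∑ i, w i p.1 * w i p.2 := funext fun p => hbridge p.1 p.2
    rw [this]
    exact continuous_finset_sum _ fun i _ =>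
      ((hwc i).comp continuous_fst).mul ((hwc i).comp continuous_snd)
  -- bounds
  set Cb : ℝ := (∑ i, ∑ j, |B i j|) + 1 with hCbdef
  have hCb0 : (0:ℝ) ≤ Cb := by positivity
  have hcoord : ∀ (x : EuclideanSpace ℝ (Fin n)) (j : Fin n), |x j| ≤ ‖x‖ := by
    intro x j
    rw [show |x j| = Real.sqrt (|x j|^2) from (Real.sqrt_sq (abs_nonneg _)).symm,
      EuclideanSpace.norm_eq]
    apply Real.sqrt_le_sqrt
    have h := Finset.single_le_sum (f := fun i => ‖x i‖^2) (fun i _ => by positivity)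
      (Finset.mem_univ j)
    simpa [Real.norm_eq_abs] using h
  have hwb : ∀ x ∈ S, ∀ i, |w i x| ≤ Cb := by
    intro x hx i
    have hx1 : ‖x‖ = 1 := (hmemS x).1 hx
    calc |w i x| ≤ ∑ j, |B i j * x j| := Finset.abs_sum_le_sum_abs _ _
      _ ≤ ∑ j, |B i j| := by
          refine Finset.sum_le_sum fun j _ => ?_
          rw [abs_mul]
          have h1 : |x j| ≤ 1 := hx1 ▸ hcoord x j
          nlinarith [abs_nonneg (B i j), abs_nonneg (x j)]
      _ ≤ Cb := by
          rw [hCbdef]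
          have h2 : ∑ j, |B i j| ≤ ∑ i, ∑ j, |B i j| :=
            Finset.single_le_sum (f := fun i => ∑ j, |B i j|) (fun i _ => by positivity)
              (Finset.mem_univ i)
          linarith
  set R : ℝ := n * Cb^2 with hRdef
  have hR0 : (0:ℝ) ≤ R := by positivity
  have hcbound : ∀ x ∈ S, ∀ y ∈ S, |(⟪x, T y⟫ : ℝ)| ≤ R := by
    intro x hx y hy
    rw [hbridge]
    calc |∑ i, w i x * w i y| ≤ ∑ i, |w i x * w i y| := Finset.abs_sum_le_sum_abs _ _
      _ ≤ ∑ _i : Fin n, Cb^2 := by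
          refine Finset.sum_le_sum fun i _ => ?_
          rw [abs_mul, sq]
          exact mul_le_mul (hwb x hx i) (hwb y hy i) (abs_nonneg _) hCb0
      _ = R := by simp [hRdef, Finset.sum_const, nsmul_eq_mul]
  -- measures
  set ν := Measure.map H μ with hνdef
  haveI hνP : IsProbabilityMeasure ν := Measure.isProbabilityMeasure_map hHm.aemeasurable
  have hνS : ν S = 1 := by
    rw [hνdef, Measure.map_apply hHm hSm]
    refine le_antisymm prob_le_one ?_
    rw [← hμ]
    exact measure_mono fun x hx => hHS x hx
  have haeμ : ∀ᵐ x ∂μ, x ∈ S := ae_mem_of_meas_one μ hSm hμ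
  have haeν : ∀ᵐ x ∂ν, x ∈ S := ae_mem_of_meas_one ν hSm hνS
  -- integrability of inner integrand
  have hcxb : ∀ (x : EuclideanSpace ℝ (Fin n)), ∀ y ∈ S, |(⟪x, T y⟫ : ℝ)| ≤ ∑ i, |w i x| * Cb := by
    intro x y hy
    rw [hbridge]
    calc |∑ i, w i x * w i y| ≤ ∑ i, |w i x * w i y| := Finset.abs_sum_le_sum_abs _ _
      _ ≤ ∑ i, |w i x| * Cb := by
          refine Finset.sum_le_sum fun i _ => ?_
          rw [abs_mul]
          exact mul_le_mul_of_nonneg_left (hwb y hy i) (abs_nonneg _)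
  have hexpC : ∀ x : EuclideanSpace ℝ (Fin n),
      Continuous fun y => Real.exp ⟪x, T y⟫ := by
    intro x
    have hTc : Continuous T := LinearMap.continuous_of_finiteDimensional T
    fun_prop
  have hIntμ : ∀ x, Integrable (fun y => Real.exp ⟪x, T y⟫) μ := by
    intro x
    refine Integrable.mono' (integrable_const (Real.exp (∑ i, |w i x| * Cb)))
      (hexpC x).aestronglyMeasurable ?_
    filter_upwards [haeμ] with y hy
    rw [Real.norm_eq_abs, abs_of_pos (Real.exp_pos _)]
    exact Real.exp_le_exp.2 ((le_abs_self _).trans (hcxb x y hy))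
  have hIntν : ∀ x, Integrable (fun y => Real.exp ⟪x, T y⟫) ν := by
    intro x
    refine Integrable.mono' (integrable_const (Real.exp (∑ i, |w i x| * Cb)))
      (hexpC x).aestronglyMeasurable ?_
    filter_upwards [haeν] with y hy
    rw [Real.norm_eq_abs, abs_of_pos (Real.exp_pos _)]
    exact Real.exp_le_exp.2 ((le_abs_self _).trans (hcxb x y hy))
  -- inner integral functions
  set F1 : EuclideanSpace ℝ (Fin n) → ℝ := fun x => ∫ y, Real.exp ⟪x, T y⟫ ∂μ with hF1def
  set F2 : EuclideanSpace ℝ (Fin n) → ℝ := fun x => ∫ y, Real.exp ⟪x, T (H y)⟫ ∂μ with hF2def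
  have hF2alt : ∀ x, (∫ y, Real.exp ⟪x, T y⟫ ∂ν) = F2 x := by
    intro x
    rw [hνdef, integral_map hHm.aemeasurable (hexpC x).aestronglyMeasurable]
  have hinner : ∀ x, (∫ y, Real.exp ⟪x, T y⟫ ∂((2 : ℝ≥0∞)⁻¹ • (μ + ν)))
      = 2⁻¹ * (F1 x + F2 x) := by
    intro x
    rw [integral_smul_measure, integral_add_measure (hIntμ x) (hIntν x), hF2alt x]
    have h1 : (∫ y, Real.exp ⟪x, T y⟫ ∂μ) = F1 x := rfl
    rw [h1]
    simp [ENNReal.toReal_inv, smul_eq_mul]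
  -- measurability and bounds of F1 F2
  have hF1m : StronglyMeasurable F1 :=
    (Real.continuous_exp.comp hcC).stronglyMeasurable.integral_prod_right'
  have hF2m : StronglyMeasurable F2 := by
    have : Continuous fun p : EuclideanSpace ℝ (Fin n) × EuclideanSpace ℝ (Fin n) =>
        Real.exp ⟪p.1, T (H p.2)⟫ :=
      Real.continuous_exp.comp (by have hTc : Continuous T := LinearMap.continuous_of_finiteDimensional T; fun_prop : Continuous fun p : EuclideanSpace ℝ (Fin n) × EuclideanSpace ℝ (Fin n) => (⟪p.1, T (H p.2)⟫ : ℝ))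
    exact this.stronglyMeasurable.integral_prod_right'
  have hF1b : ∀ x ∈ S, ‖F1 x‖ ≤ Real.exp R := by
    intro x hx
    have h1 : ∀ᵐ y ∂μ, ‖Real.exp ⟪x, T y⟫‖ ≤ Real.exp R := by
      filter_upwards [haeμ] with y hy
      rw [Real.norm_eq_abs, abs_of_pos (Real.exp_pos _)]
      exact Real.exp_le_exp.2 ((le_abs_self _).trans (hcbound x hx y hy))
    have := norm_integral_le_of_norm_le_const h1
    simpa using this
  have hF2b : ∀ x ∈ S, ‖F2 x‖ ≤ Real.exp R := by
    intro x hx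
    have h1 : ∀ᵐ y ∂μ, ‖Real.exp ⟪x, T (H y)⟫‖ ≤ Real.exp R := by
      filter_upwards [haeμ] with y hy
      rw [Real.norm_eq_abs, abs_of_pos (Real.exp_pos _)]
      exact Real.exp_le_exp.2 ((le_abs_self _).trans (hcbound x hx (H y) (hHS y hy)))
    have := norm_integral_le_of_norm_le_const h1
    simpa using this
  have hIntF1μ : Integrable F1 μ :=
    Integrable.mono' (integrable_const (Real.exp R)) hF1m.aestronglyMeasurable
      (by filter_upwards [haeμ] with x hx; exact hF1b x hx)
  have hIntF2μ : Integrable F2 μ :=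
    Integrable.mono' (integrable_const (Real.exp R)) hF2m.aestronglyMeasurable
      (by filter_upwards [haeμ] with x hx; exact hF2b x hx)
  have hIntF1ν : Integrable F1 ν :=
    Integrable.mono' (integrable_const (Real.exp R)) hF1m.aestronglyMeasurable
      (by filter_upwards [haeν] with x hx; exact hF1b x hx)
  have hIntF2ν : Integrable F2 ν :=
    Integrable.mono' (integrable_const (Real.exp R)) hF2m.aestronglyMeasurable
      (by filter_upwards [haeν] with x hx; exact hF2b x hx)
  have hF1H : ∀ x, F1 (H x) = F2 x := by
    intro x
    show (∫ y, Real.exp ⟪H x, T y⟫ ∂μ) = ∫ y, Real.exp ⟪x, T (H y)⟫ ∂μ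
    exact integral_congr_ae (Filter.Eventually.of_forall fun y => by simp only [key1])
  have hF2H : ∀ x, F2 (H x) = F1 x := by
    intro x
    show (∫ y, Real.exp ⟪H x, T (H y)⟫ ∂μ) = ∫ y, Real.exp ⟪x, T y⟫ ∂μ
    exact integral_congr_ae (Filter.Eventually.of_forall fun y => by simp only [key2])
  -- outer expansion
  have houter : energy D ((2 : ℝ≥0∞)⁻¹ • (μ + ν))
      = 2⁻¹ * (∫ x, F1 x ∂μ + ∫ x, F2 x ∂μ) := by
    rw [henergy_def]
    calc ∫ x, ∫ y, Real.exp ⟪x, T y⟫ ∂((2 : ℝ≥0∞)⁻¹ • (μ + ν)) ∂((2 : ℝ≥0∞)⁻¹ • (μ + ν))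
        = ∫ x, 2⁻¹ * (F1 x + F2 x) ∂((2 : ℝ≥0∞)⁻¹ • (μ + ν)) := by
          exact integral_congr_ae (Filter.Eventually.of_forall hinner)
      _ = 2⁻¹ * ((∫ x, 2⁻¹ * (F1 x + F2 x) ∂μ) + ∫ x, 2⁻¹ * (F1 x + F2 x) ∂ν) := by
          rw [integral_smul_measure, integral_add_measure
            (by exact (hIntF1μ.add hIntF2μ).const_mul _ :
              Integrable (fun x => 2⁻¹ * (F1 x + F2 x)) μ)
            (by exact (hIntF1ν.add hIntF2ν).const_mul _ :
              Integrable (fun x => 2⁻¹ * (F1 x + F2 x)) ν)]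
          simp [ENNReal.toReal_inv, smul_eq_mul]
      _ = 2⁻¹ * (∫ x, F1 x ∂μ + ∫ x, F2 x ∂μ) := by
          have hνint : ∫ x, 2⁻¹ * (F1 x + F2 x) ∂ν = ∫ x, 2⁻¹ * (F1 (H x) + F2 (H x)) ∂μ := by
            rw [hνdef, integral_map hHm.aemeasurable]
            exact (((hF1m.add hF2m).const_mul _)).aestronglyMeasurable
          rw [hνint]
          have heq : ∀ x, 2⁻¹ * (F1 (H x) + F2 (H x)) = 2⁻¹ * (F2 x + F1 x) := by
            intro x; rw [hF1H, hF2H]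
          rw [integral_congr_ae (Filter.Eventually.of_forall heq)]
          rw [integral_const_mul, integral_const_mul,
            integral_add hIntF1μ hIntF2μ, integral_add hIntF2μ hIntF1μ]
          ring
  have henergyμ : energy D μ = ∫ x, F1 x ∂μ := by
    rw [henergy_def μ]
  -- core inequality : ∫ F2 dμ ≤ ∫ F1 dμ
  set Θ := μ.prod μ with hΘdef
  haveI : IsProbabilityMeasure Θ := by rw [hΘdef]; infer_instance
  have haeΘ : ∀ᵐ p ∂Θ, p.1 ∈ S ∧ p.2 ∈ S := by
    have hΘS : Θ (S ×ˢ S) = 1 := by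
      rw [hΘdef, Measure.prod_prod, hμ, one_mul]
    have h := ae_mem_of_meas_one Θ (hSm.prod hSm) hΘS
    filter_upwards [h] with p hp
    exact ⟨hp.1, hp.2⟩
  have hc1m : AEStronglyMeasurable
      (fun p : EuclideanSpace ℝ (Fin n) × EuclideanSpace ℝ (Fin n) => (⟪p.1, T p.2⟫ : ℝ)) Θ :=
    hcC.aestronglyMeasurable
  have hc2m : AEStronglyMeasurable
      (fun p : EuclideanSpace ℝ (Fin n) × EuclideanSpace ℝ (Fin n) => (⟪p.1, T (H p.2)⟫ : ℝ)) Θ :=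
    (by have hTc : Continuous T := LinearMap.continuous_of_finiteDimensional T; fun_prop : Continuous fun p : EuclideanSpace ℝ (Fin n) × EuclideanSpace ℝ (Fin n) => (⟪p.1, T (H p.2)⟫ : ℝ)).aestronglyMeasurable
  have hbound1 : ∀ᵐ p ∂Θ, |(⟪p.1, T p.2⟫ : ℝ)| ≤ R := by
    filter_upwards [haeΘ] with p hp
    exact hcbound p.1 hp.1 p.2 hp.2
  have hbound2 : ∀ᵐ p ∂Θ, |(⟪p.1, T (H p.2)⟫ : ℝ)| ≤ R := by
    filter_upwards [haeΘ] with p hp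
    exact hcbound p.1 hp.1 (H p.2) (hHS p.2 hp.2)
  have hs1 := hasSum_integral_exp Θ hc1m hR0 hbound1
  have hs2 := hasSum_integral_exp Θ hc2m hR0 hbound2
  have hmono : ∀ (k : ℕ) (G : Fin k → Fin n), Integrable (fun x => ∏ j, w (G j) x) μ := by
    intro k G
    refine Integrable.mono' (integrable_const (Cb ^ k))
      (continuous_finset_prod _ fun j _ => hwc (G j)).aestronglyMeasurable ?_
    filter_upwards [haeμ] with x hx
    rw [Real.norm_eq_abs, Finset.abs_prod]
    refine le_trans (Finset.prod_le_prod (fun j _ => abs_nonneg _)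
      (fun j _ => hwb x hx (G j))) ?_
    simp [Finset.prod_const]
  have hmonoH : ∀ (k : ℕ) (G : Fin k → Fin n),
      Integrable (fun y => ∏ j, w (G j) (H y)) μ := by
    intro k G
    refine Integrable.mono' (integrable_const (Cb ^ k))
      (continuous_finset_prod _ fun j _ => (hwc (G j)).comp hHc).aestronglyMeasurable ?_
    filter_upwards [haeμ] with x hx
    rw [Real.norm_eq_abs, Finset.abs_prod]
    refine le_trans (Finset.prod_le_prod (fun j _ => abs_nonneg _)
      (fun j _ => hwb (H x) (hHS x hx) (G j))) ?_
    simp [Finset.prod_const]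
  have hk : ∀ k : ℕ, (∫ p, (⟪p.1, T (H p.2)⟫ : ℝ) ^ k ∂Θ) ≤ ∫ p, (⟪p.1, T p.2⟫ : ℝ) ^ k ∂Θ := by
    intro k
    have e11 : ∫ p, (⟪p.1, T p.2⟫ : ℝ) ^ k ∂Θ
        = ∑ G : Fin k → Fin n, (∫ x, ∏ j, w (G j) x ∂μ) * (∫ y, ∏ j, w (G j) y ∂μ) := by
      rw [hΘdef, show (fun p : EuclideanSpace ℝ (Fin n) × EuclideanSpace ℝ (Fin n) =>
          (⟪p.1, T p.2⟫ : ℝ) ^ k) = fun p => (∑ i, w i p.1 * w i p.2) ^ k from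
          funext fun p => by rw [hbridge]]
      exact expand_lemma μ μ w w (hmono k) (hmono k)
    have e12 : ∫ p, (⟪p.1, T (H p.2)⟫ : ℝ) ^ k ∂Θ
        = ∑ G : Fin k → Fin n, (∫ x, ∏ j, w (G j) x ∂μ) * (∫ y, ∏ j, w (G j) (H y) ∂μ) := by
      rw [hΘdef, show (fun p : EuclideanSpace ℝ (Fin n) × EuclideanSpace ℝ (Fin n) =>
          (⟪p.1, T (H p.2)⟫ : ℝ) ^ k) = fun p => (∑ i, w i p.1 * (fun y => w i (H y)) p.2) ^ k from
          funext fun p => by rw [hbridge]]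
      exact expand_lemma μ μ w (fun i y => w i (H y)) (hmono k) (hmonoH k)
    have e22 : ∫ p, (⟪p.1, T p.2⟫ : ℝ) ^ k ∂Θ
        = ∑ G : Fin k → Fin n, (∫ x, ∏ j, w (G j) (H x) ∂μ) * (∫ y, ∏ j, w (G j) (H y) ∂μ) := by
      have hpt : (fun p : EuclideanSpace ℝ (Fin n) × EuclideanSpace ℝ (Fin n) =>
          (⟪p.1, T p.2⟫ : ℝ) ^ k)
          = fun p => (∑ i, (fun x => w i (H x)) p.1 * (fun y => w i (H y)) p.2) ^ k := by
        funext p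
        rw [← key2 p.1 p.2, hbridge]
      rw [hΘdef, hpt]
      exact expand_lemma μ μ (fun i x => w i (H x)) (fun i y => w i (H y)) (hmonoH k) (hmonoH k)
    rw [e12, e11]
    have h22 := e22.symm.trans e11
    set A : (Fin k → Fin n) → ℝ := fun G => ∫ x, ∏ j, w (G j) x ∂μ with hA
    set A' : (Fin k → Fin n) → ℝ := fun G => ∫ x, ∏ j, w (G j) (H x) ∂μ with hA'
    have h1 : ∀ G : Fin k → Fin n, A G * A' G ≤ 2⁻¹ * (A G * A G) + 2⁻¹ * (A' G * A' G) := by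
      intro G; nlinarith [sq_nonneg (A G - A' G)]
    calc ∑ G : Fin k → Fin n, A G * A' G
        ≤ ∑ G : Fin k → Fin n, (2⁻¹ * (A G * A G) + 2⁻¹ * (A' G * A' G)) :=
          Finset.sum_le_sum fun G _ => h1 G
      _ = 2⁻¹ * (∑ G : Fin k → Fin n, A G * A G) + 2⁻¹ * (∑ G : Fin k → Fin n, A' G * A' G) := by
          rw [Finset.sum_add_distrib, ← Finset.mul_sum, ← Finset.mul_sum]
      _ = ∑ G : Fin k → Fin n, A G * A G := by rw [h22]; ring
  have hI : (∫ p, Real.exp ⟪p.1, T (H p.2)⟫ ∂Θ) ≤ ∫ p, Real.exp ⟪p.1, T p.2⟫ ∂Θ :=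
    hasSum_le (fun k => mul_le_mul_of_nonneg_left (hk k) (by positivity)) hs2 hs1
  have hInt1 : Integrable (fun p : EuclideanSpace ℝ (Fin n) × EuclideanSpace ℝ (Fin n) =>
      Real.exp ⟪p.1, T p.2⟫) Θ := by
    refine Integrable.mono' (integrable_const (Real.exp R))
      (Real.continuous_exp.comp hcC).aestronglyMeasurable ?_
    filter_upwards [hbound1] with p hp
    rw [Real.norm_eq_abs, abs_of_pos (Real.exp_pos _)]
    exact Real.exp_le_exp.2 ((le_abs_self _).trans hp)
  have hInt2 : Integrable (fun p : EuclideanSpace ℝ (Fin n) × EuclideanSpace ℝ (Fin n) =>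
      Real.exp ⟪p.1, T (H p.2)⟫) Θ := by
    refine Integrable.mono' (integrable_const (Real.exp R))
      (Real.continuous_exp.comp (by have hTc : Continuous T := LinearMap.continuous_of_finiteDimensional T; fun_prop : Continuous fun p : EuclideanSpace ℝ (Fin n) × EuclideanSpace ℝ (Fin n) => (⟪p.1, T (H p.2)⟫ : ℝ))).aestronglyMeasurable ?_
    filter_upwards [hbound2] with p hp
    rw [Real.norm_eq_abs, abs_of_pos (Real.exp_pos _)]
    exact Real.exp_le_exp.2 ((le_abs_self _).trans hp)
  have i1 : ∫ x, F1 x ∂μ = ∫ p, Real.exp ⟪p.1, T p.2⟫ ∂Θ := by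
    rw [hΘdef, integral_prod _ hInt1]
  have i2 : ∫ x, F2 x ∂μ = ∫ p, Real.exp ⟪p.1, T (H p.2)⟫ ∂Θ := by
    rw [hΘdef, integral_prod _ hInt2]
  have hcore : ∫ x, F2 x ∂μ ≤ ∫ x, F1 x ∂μ := by rw [i1, i2]; exact hI
  rw [houter, henergyμ]
  linarith
end

section
/- Let D be a symmetric negative semi-definite matrix and μ a probability measure on the unit sphere. Define the antisymmetrization μ̃ by dμ̃(x) = (1/2)(dμ(x) + dμ(−x)), i.e. μ̃ = (1/2)(μ + N_# μ) with N(x) = −x. Then E(μ̃) ≥ E(μ), where E(μ) = ∬ exp(⟪x, D y⟫) dμ(x) dμ(y). -/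
open MeasureTheory RealInnerProductSpace ENNReal

/-- coordinates are bounded by the norm in Euclidean space -/
lemma coord_le_norm {n : ℕ} (x : EuclideanSpace ℝ (Fin n)) (j : Fin n) : |x j| ≤ ‖x‖ := by
  rw [EuclideanSpace.norm_eq, ← Real.sqrt_sq_eq_abs]
  apply Real.sqrt_le_sqrt
  exact Finset.single_le_sum (f := fun i => ‖x i‖ ^ 2) (fun i _ => sq_nonneg _)
    (Finset.mem_univ j) |>.trans_eq' (by simp [Real.norm_eq_abs, sq_abs])

open Matrix in
/-- key algebraic identity: writing `-D = B * B` with `B` symmetric -/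
lemma mat_alg {n : ℕ} (D B : Matrix (Fin n) (Fin n) ℝ) (hBB : B * B = -D) (hBsym : Bᵀ = B)
    (x y : Fin n → ℝ) :
    ∑ j, x j * ∑ k, D j k * y k = -∑ i, (∑ j, B i j * x j) * (∑ k, B i k * y k) := by
  have hsym : ∀ a b, B a b = B b a := fun a b => by
    conv_lhs => rw [← hBsym, Matrix.transpose_apply]
  have hD : ∀ j k, D j k = -∑ i, B i j * B i k := by
    intro j k
    have h : (B * B) j k = (-D) j k := by rw [hBB]
    rw [Matrix.mul_apply] at h
    simp only [Matrix.neg_apply] at h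
    rw [neg_eq_iff_eq_neg.symm, ← h]
    exact Finset.sum_congr rfl fun i _ => by rw [hsym j i]
  have e1 : ∀ i, (∑ j, B i j * x j) * (∑ k, B i k * y k)
      = ∑ j, ∑ k, B i j * x j * (B i k * y k) := fun i => Finset.sum_mul_sum _ _ _ _
  simp only [e1, hD]
  rw [Finset.sum_comm]
  rw [← Finset.sum_neg_distrib]
  refine Finset.sum_congr rfl fun j _ => ?_
  rw [Finset.sum_comm]
  simp only [neg_mul, Finset.mul_sum, Finset.sum_neg_distrib, mul_neg, neg_neg]
  refine neg_inj.mpr (Finset.sum_congr rfl fun k _ => ?_)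
  rw [Finset.sum_mul, Finset.mul_sum]
  exact Finset.sum_congr rfl fun i _ => by ring

/-- a.e.-bounded measurable functions are integrable over finite measures -/
lemma int_of_bound {α : Type*} [MeasurableSpace α] (ρ : Measure α) [IsFiniteMeasure ρ]
    {f : α → ℝ} (hm : AEStronglyMeasurable f ρ) {b : ℝ} (hb : ∀ᵐ x ∂ρ, |f x| ≤ b) :
    Integrable f ρ :=
  Integrable.mono' (integrable_const b) hm (by simpa [Real.norm_eq_abs] using hb)

lemma exp_int {α : Type*} [MeasurableSpace α] (ρ : Measure α) [IsFiniteMeasure ρ]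
    {u : α → ℝ} (hu : AEStronglyMeasurable u ρ) {b : ℝ} (hb : ∀ᵐ x ∂ρ, |u x| ≤ b) :
    Integrable (fun x => Real.exp (u x)) ρ :=
  int_of_bound ρ (Real.continuous_exp.comp_aestronglyMeasurable hu)
    (b := Real.exp b) (hb.mono fun x hx => by
      rw [abs_of_pos (Real.exp_pos _)]
      exact Real.exp_le_exp.2 ((le_abs_self _).trans hx))

/-- probability measures on the sphere live a.e. on the sphere -/
lemma ae_sphere {n : ℕ} (ρ : Measure (EuclideanSpace ℝ (Fin n))) [IsProbabilityMeasure ρ]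
    (hρ : ρ (Metric.sphere (0 : EuclideanSpace ℝ (Fin n)) 1) = 1) :
    ∀ᵐ x ∂ρ, ‖x‖ = 1 := by
  have hc : ρ (Metric.sphere (0 : EuclideanSpace ℝ (Fin n)) 1)ᶜ = 0 := by
    rw [measure_compl Metric.isClosed_sphere.measurableSet (measure_ne_top ρ _), hρ,
      measure_univ]
    simp
  rw [ae_iff]
  refine measure_mono_null (fun x hx => ?_) hc
  simp only [Set.mem_setOf_eq] at hx
  simpa [Metric.mem_sphere, dist_zero_right] using hx

theorem stmt12 {n : ℕ} (D : Matrix (Fin n) (Fin n) ℝ) (hD : (-D).PosSemidef)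
    (μ : Measure (EuclideanSpace ℝ (Fin n))) [IsProbabilityMeasure μ]
    (hμ : μ (Metric.sphere (0 : EuclideanSpace ℝ (Fin n)) 1) = 1) :
    energy D μ ≤
      energy D ((2 : ℝ≥0∞)⁻¹ •
        (μ + Measure.map (fun x : EuclideanSpace ℝ (Fin n) => -x) μ)) := by
  classical
  set ν := Measure.map (fun x : EuclideanSpace ℝ (Fin n) => -x) μ with hνdef
  open scoped MatrixOrder Matrix.Norms.L2Operator in
  set B := CFC.sqrt (-D) with hBdef
  have hBsym : Matrix.transpose B = B := by
    open scoped MatrixOrder Matrix.Norms.L2Operator in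
    have h := (Matrix.LE.le.posSemidef (CFC.sqrt_nonneg (-D))).1
    rwa [Matrix.IsHermitian, Matrix.conjTranspose_eq_transpose_of_trivial] at h
  have hBB : B * B = -D := by
    open scoped MatrixOrder Matrix.Norms.L2Operator in
    exact CFC.sqrt_mul_sqrt_self (-D) hD.nonneg
  set g : Fin n → EuclideanSpace ℝ (Fin n) → ℝ := fun i x => ∑ j, B i j * x j with hgdef
  set s : EuclideanSpace ℝ (Fin n) → EuclideanSpace ℝ (Fin n) → ℝ := fun x y => ∑ i, g i x * g i y with hsdef
  -- the inner product is `-s`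
  have key : ∀ x y : EuclideanSpace ℝ (Fin n), ⟪x, Matrix.toEuclideanLin D y⟫ = -(s x y) := by
    intro x y
    have h1 : ⟪x, Matrix.toEuclideanLin D y⟫ = ∑ j, x j * ∑ k, D j k * y k := by
      simp [Matrix.toEuclideanLin_apply, PiLp.inner_apply, RCLike.inner_apply, Matrix.mulVec,
        dotProduct]
      exact Finset.sum_congr rfl fun _ _ => mul_comm _ _
    rw [h1, mat_alg D B hBB hBsym (fun j => x j) (fun j => y j)]
  -- continuity
  have hgc : ∀ i, Continuous (g i) := fun i =>
    continuous_finset_sum _ fun j _ => continuous_const.mul (EuclideanSpace.proj j).continuous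
  have hsc : Continuous (fun z : EuclideanSpace ℝ (Fin n) × EuclideanSpace ℝ (Fin n) => s z.1 z.2) :=
    continuous_finset_sum _ fun i _ =>
      ((hgc i).comp continuous_fst).mul ((hgc i).comp continuous_snd)
  -- bounds
  set c : Fin n → ℝ := fun i => ∑ j, |B i j| with hcdef
  have hc0 : ∀ i, 0 ≤ c i := fun i => Finset.sum_nonneg fun j _ => abs_nonneg _
  have hgb : ∀ (i) (x : EuclideanSpace ℝ (Fin n)), ‖x‖ = 1 → |g i x| ≤ c i := by
    intro i x hx
    refine (Finset.abs_sum_le_sum_abs _ _).trans (Finset.sum_le_sum fun j _ => ?_)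
    rw [abs_mul]
    exact mul_le_of_le_one_right (abs_nonneg _) (hx ▸ coord_le_norm x j)
  set C : ℝ := ∑ i, c i * c i with hCdef
  have hsb : ∀ x y : EuclideanSpace ℝ (Fin n), ‖x‖ = 1 → ‖y‖ = 1 → |s x y| ≤ C := by
    intro x y hx hy
    refine (Finset.abs_sum_le_sum_abs _ _).trans (Finset.sum_le_sum fun i _ => ?_)
    rw [abs_mul]
    exact mul_le_mul (hgb i x hx) (hgb i y hy) (abs_nonneg _) (hc0 i)
  have hsb1 : ∀ (x : EuclideanSpace ℝ (Fin n)) (y : EuclideanSpace ℝ (Fin n)), ‖y‖ = 1 → |s x y| ≤ ∑ i, |g i x| * c i := by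
    intro x y hy
    refine (Finset.abs_sum_le_sum_abs _ _).trans (Finset.sum_le_sum fun i _ => ?_)
    rw [abs_mul]
    exact mul_le_mul_of_nonneg_left (hgb i y hy) (abs_nonneg _)
  -- a.e. facts
  have haeμ : ∀ᵐ x ∂μ, ‖x‖ = 1 := ae_sphere μ hμ
  have hprobν : IsProbabilityMeasure ν := Measure.isProbabilityMeasure_map measurable_neg.aemeasurable
  have hν1 : ν (Metric.sphere (0 : EuclideanSpace ℝ (Fin n)) 1) = 1 := by
    rw [hνdef, Measure.map_apply measurable_neg Metric.isClosed_sphere.measurableSet]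
    have : (fun x : EuclideanSpace ℝ (Fin n) => -x) ⁻¹' Metric.sphere (0 : EuclideanSpace ℝ (Fin n)) 1 = Metric.sphere (0 : EuclideanSpace ℝ (Fin n)) 1 := by
      ext z
      simp [Metric.mem_sphere, dist_zero_right]
    rw [this, hμ]
  have haeν : ∀ᵐ x ∂ν, ‖x‖ = 1 := ae_sphere ν hν1
  have haeπ : ∀ᵐ z ∂(μ.prod μ), ‖z.1‖ = 1 ∧ ‖z.2‖ = 1 := by
    rw [ae_iff]
    have hcompl : μ (Metric.sphere (0 : EuclideanSpace ℝ (Fin n)) 1)ᶜ = 0 := by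
      rw [measure_compl Metric.isClosed_sphere.measurableSet (measure_ne_top μ _), hμ,
        measure_univ]
      simp
    have hnull : (μ.prod μ) (((Metric.sphere (0 : EuclideanSpace ℝ (Fin n)) 1)ᶜ ×ˢ Set.univ) ∪
        (Set.univ ×ˢ (Metric.sphere (0 : EuclideanSpace ℝ (Fin n)) 1)ᶜ)) = 0 := by
      refine measure_union_null ?_ ?_ <;> rw [Measure.prod_prod, hcompl] <;> simp
    refine measure_mono_null (fun z hz => ?_) hnull
    simp only [Set.mem_setOf_eq, not_and_or] at hz
    rcases hz with hz | hz
    · exact Or.inl ⟨by simpa [Metric.mem_sphere, dist_zero_right] using hz, trivial⟩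
    · exact Or.inr ⟨trivial, by simpa [Metric.mem_sphere, dist_zero_right] using hz⟩
  -- neg symmetry of s
  have hgneg : ∀ (i) (x : EuclideanSpace ℝ (Fin n)), g i (-x) = -(g i x) := by
    intro i x
    show (∑ j, B i j * (-x) j) = -∑ j, B i j * x j
    rw [← Finset.sum_neg_distrib]
    exact Finset.sum_congr rfl fun j _ => by simp [mul_neg]
  have hsneg1 : ∀ x y : EuclideanSpace ℝ (Fin n), s (-x) y = -(s x y) := by
    intro x y
    show (∑ i, g i (-x) * g i y) = -∑ i, g i x * g i y
    rw [← Finset.sum_neg_distrib]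
    exact Finset.sum_congr rfl fun i _ => by rw [hgneg]; ring
  have hsneg2 : ∀ x y : EuclideanSpace ℝ (Fin n), s x (-y) = -(s x y) := by
    intro x y
    show (∑ i, g i x * g i (-y)) = -∑ i, g i x * g i y
    rw [← Finset.sum_neg_distrib]
    exact Finset.sum_congr rfl fun i _ => by rw [hgneg]; ring
  -- abbreviations
  set P : ℝ := ∫ x, ∫ y, Real.exp (-(s x y)) ∂μ ∂μ with hPdef
  set Q : ℝ := ∫ x, ∫ y, Real.exp (s x y) ∂μ ∂μ with hQdef
  have hC0 : 0 ≤ C := Finset.sum_nonneg fun i _ => mul_nonneg (hc0 i) (hc0 i)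
  -- integrability of the inner integrands, for every fixed x
  have hintμ1 : ∀ x, Integrable (fun y => Real.exp (-(s x y))) μ := fun x =>
    exp_int μ ((hsc.comp (Continuous.prodMk_right x)).neg).aestronglyMeasurable
      (haeμ.mono fun y hy => by rw [abs_neg]; exact hsb1 x y hy)
  have hintν1 : ∀ x, Integrable (fun y => Real.exp (-(s x y))) ν := fun x =>
    exp_int ν ((hsc.comp (Continuous.prodMk_right x)).neg).aestronglyMeasurable
      (haeν.mono fun y hy => by rw [abs_neg]; exact hsb1 x y hy)
  -- the two inner integrals
  set I1 : EuclideanSpace ℝ (Fin n) → ℝ := fun x => ∫ y, Real.exp (-(s x y)) ∂μ with hI1def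
  set I2 : EuclideanSpace ℝ (Fin n) → ℝ := fun x => ∫ y, Real.exp (-(s x y)) ∂ν with hI2def
  have hmeasI1 : StronglyMeasurable I1 :=
    StronglyMeasurable.integral_prod_right'
      (f := fun z : EuclideanSpace ℝ (Fin n) × EuclideanSpace ℝ (Fin n) =>
        Real.exp (-(s z.1 z.2)))
      (Real.continuous_exp.comp hsc.neg).stronglyMeasurable
  have hmeasI2 : StronglyMeasurable I2 :=
    StronglyMeasurable.integral_prod_right'
      (f := fun z : EuclideanSpace ℝ (Fin n) × EuclideanSpace ℝ (Fin n) =>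
        Real.exp (-(s z.1 z.2)))
      (Real.continuous_exp.comp hsc.neg).stronglyMeasurable
  -- a.e. bounds for the inner integrals
  have hbd1 : ∀ x : EuclideanSpace ℝ (Fin n), ‖x‖ = 1 → |I1 x| ≤ Real.exp C := by
    intro x hx
    have h1 : ‖∫ y, Real.exp (-(s x y)) ∂μ‖ ≤ ∫ _, Real.exp C ∂μ := by
      refine norm_integral_le_of_norm_le (integrable_const _) (haeμ.mono fun y hy => ?_)
      rw [Real.norm_eq_abs, abs_of_pos (Real.exp_pos _)]
      exact Real.exp_le_exp.2 ((neg_le_abs _).trans (hsb x y hx hy))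
    rw [integral_const, probReal_univ] at h1
    simpa [Real.norm_eq_abs] using h1
  have hbd2 : ∀ x : EuclideanSpace ℝ (Fin n), ‖x‖ = 1 → |I2 x| ≤ Real.exp C := by
    intro x hx
    have h1 : ‖∫ y, Real.exp (-(s x y)) ∂ν‖ ≤ ∫ _, Real.exp C ∂ν := by
      refine norm_integral_le_of_norm_le (integrable_const _) (haeν.mono fun y hy => ?_)
      rw [Real.norm_eq_abs, abs_of_pos (Real.exp_pos _)]
      exact Real.exp_le_exp.2 ((neg_le_abs _).trans (hsb x y hx hy))
    rw [integral_const, probReal_univ] at h1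
    simpa [Real.norm_eq_abs] using h1
  have hI1intμ : Integrable I1 μ :=
    int_of_bound μ hmeasI1.aestronglyMeasurable (haeμ.mono fun x hx => hbd1 x hx)
  have hI2intμ : Integrable I2 μ :=
    int_of_bound μ hmeasI2.aestronglyMeasurable (haeμ.mono fun x hx => hbd2 x hx)
  have hI1intν : Integrable I1 ν :=
    int_of_bound ν hmeasI1.aestronglyMeasurable (haeν.mono fun x hx => hbd1 x hx)
  have hI2intν : Integrable I2 ν :=
    int_of_bound ν hmeasI2.aestronglyMeasurable (haeν.mono fun x hx => hbd2 x hx)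
  -- split the inner integral over the symmetrized measure
  have step1 : ∀ x, (∫ y, Real.exp (-(s x y)) ∂((2 : ℝ≥0∞)⁻¹ • (μ + ν)))
      = (1/2) * (I1 x + I2 x) := by
    intro x
    rw [integral_smul_measure, integral_add_measure (hintμ1 x) (hintν1 x)]
    norm_num [ENNReal.toReal_inv]
    rfl
  -- identify the four integrals
  have hI1μ : ∫ x, I1 x ∂μ = P := rfl
  have hφ : AEMeasurable (fun x : EuclideanSpace ℝ (Fin n) => -x) μ :=
    measurable_neg.aemeasurable
  have hI2eq : ∀ x, I2 x = ∫ y, Real.exp (s x y) ∂μ := by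
    intro x
    show (∫ y, Real.exp (-(s x y)) ∂ν) = _
    rw [hνdef, integral_map hφ (show Continuous fun y => Real.exp (-(s x y)) from
      Real.continuous_exp.comp ((hsc.comp (Continuous.prodMk_right x)).neg)).aestronglyMeasurable]
    simp only [hsneg2, neg_neg]
  have hI2μ : ∫ x, I2 x ∂μ = Q := by simp only [hI2eq]; rfl
  have hI1ν : ∫ x, I1 x ∂ν = Q := by
    rw [hνdef, integral_map hφ hmeasI1.aestronglyMeasurable]
    have h : ∀ x : EuclideanSpace ℝ (Fin n), I1 (-x) = ∫ y, Real.exp (s x y) ∂μ := by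
      intro x
      show (∫ y, Real.exp (-(s (-x) y)) ∂μ) = _
      simp only [hsneg1, neg_neg]
    simp only [h]
    rfl
  have hmeasJ : StronglyMeasurable (fun x => ∫ y, Real.exp (s x y) ∂μ) :=
    StronglyMeasurable.integral_prod_right'
      (f := fun z : EuclideanSpace ℝ (Fin n) × EuclideanSpace ℝ (Fin n) =>
        Real.exp (s z.1 z.2))
      (Real.continuous_exp.comp hsc).stronglyMeasurable
  have hI2ν : ∫ x, I2 x ∂ν = P := by
    calc ∫ x, I2 x ∂ν = ∫ x, (∫ y, Real.exp (s x y) ∂μ) ∂ν := by simp only [hI2eq]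
      _ = ∫ x, (∫ y, Real.exp (s (-x) y) ∂μ) ∂μ := by
          rw [hνdef, integral_map hφ hmeasJ.aestronglyMeasurable]
      _ = P := by simp only [hsneg1]; rfl
  -- compute the energy of the symmetrized measure
  have hEμ : energy D μ = P := by
    unfold energy
    simp only [key]
    rfl
  have hI12μ : Integrable (fun x => I1 x + I2 x) μ := hI1intμ.add hI2intμ
  have hI12ν : Integrable (fun x => I1 x + I2 x) ν := hI1intν.add hI2intν
  have hEmix : energy D ((2 : ℝ≥0∞)⁻¹ • (μ + ν)) = (P + Q)/2 := by
    unfold energy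
    simp only [key, step1]
    rw [integral_const_mul, integral_smul_measure,
      integral_add_measure hI12μ hI12ν,
      integral_add hI1intμ hI2intμ, integral_add hI1intν hI2intν,
      hI1μ, hI2μ, hI1ν, hI2ν]
    simp only [smul_eq_mul, ENNReal.toReal_inv, ENNReal.toReal_ofNat]
    ring
  -- the product-measure formulation
  have hintPprod : Integrable
      (fun z : EuclideanSpace ℝ (Fin n) × EuclideanSpace ℝ (Fin n) =>
        Real.exp (-(s z.1 z.2))) (μ.prod μ) :=
    exp_int _ hsc.neg.aestronglyMeasurable
      (haeπ.mono fun z hz => by rw [abs_neg]; exact hsb _ _ hz.1 hz.2)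
  have hintQprod : Integrable
      (fun z : EuclideanSpace ℝ (Fin n) × EuclideanSpace ℝ (Fin n) =>
        Real.exp (s z.1 z.2)) (μ.prod μ) :=
    exp_int _ hsc.aestronglyMeasurable (haeπ.mono fun z hz => hsb _ _ hz.1 hz.2)
  have hPprod : P = ∫ z, Real.exp (-(s z.1 z.2)) ∂(μ.prod μ) :=
    integral_integral (f := fun x y => Real.exp (-(s x y))) hintPprod
  have hQprod : Q = ∫ z, Real.exp (s z.1 z.2) ∂(μ.prod μ) :=
    integral_integral (f := fun x y => Real.exp (s x y)) hintQprod
  -- nonnegativity of the moments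
  have hintG : ∀ (m : ℕ) (p : Fin m → Fin n), Integrable
      (fun z : EuclideanSpace ℝ (Fin n) × EuclideanSpace ℝ (Fin n) =>
        (∏ j, g (p j) z.1) * (∏ j, g (p j) z.2)) (μ.prod μ) := by
    intro m p
    refine int_of_bound _ (Continuous.aestronglyMeasurable ?_)
      (b := (∏ j, c (p j)) * (∏ j, c (p j))) (haeπ.mono fun z hz => ?_)
    · exact (continuous_finset_prod _ fun j _ => (hgc (p j)).comp continuous_fst).mul
        (continuous_finset_prod _ fun j _ => (hgc (p j)).comp continuous_snd)
    · rw [abs_mul]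
      have hb : ∀ (x : EuclideanSpace ℝ (Fin n)), ‖x‖ = 1 →
          |∏ j, g (p j) x| ≤ ∏ j, c (p j) := by
        intro x hx
        rw [Finset.abs_prod]
        exact Finset.prod_le_prod (fun j _ => abs_nonneg _) (fun j _ => hgb _ _ hx)
      exact mul_le_mul (hb _ hz.1) (hb _ hz.2) (abs_nonneg _)
        (Finset.prod_nonneg fun j _ => hc0 _)
  have hmoment : ∀ m : ℕ, 0 ≤ ∫ z, (s z.1 z.2) ^ m ∂(μ.prod μ) := by
    intro m
    have hexp : ∀ z : EuclideanSpace ℝ (Fin n) × EuclideanSpace ℝ (Fin n),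
        (s z.1 z.2) ^ m = ∑ p : Fin m → Fin n,
          (∏ j, g (p j) z.1) * (∏ j, g (p j) z.2) := by
      intro z
      show (∑ i, g i z.1 * g i z.2) ^ m = _
      rw [Finset.sum_pow', Fintype.piFinset_univ]
      exact Finset.sum_congr rfl fun p _ => Finset.prod_mul_distrib
    simp only [hexp]
    rw [integral_finset_sum _ fun p _ => hintG m p]
    refine Finset.sum_nonneg fun p _ => ?_
    rw [integral_prod_mul (f := fun x => ∏ j, g (p j) x) (g := fun y => ∏ j, g (p j) y)]
    exact mul_self_nonneg _
  -- the sinh integral is nonnegative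
  have hsummable : Summable fun k : ℕ => C ^ (2*k+1) / (Nat.factorial (2*k+1)) :=
    (Real.summable_pow_div_factorial C).comp_injective (fun a b h => by omega)
  have hsinh_nonneg : 0 ≤ ∫ z, Real.sinh (s z.1 z.2) ∂(μ.prod μ) := by
    have heq : ∀ z : EuclideanSpace ℝ (Fin n) × EuclideanSpace ℝ (Fin n),
        Real.sinh (s z.1 z.2)
          = ∑' k : ℕ, (s z.1 z.2) ^ (2*k+1) / (Nat.factorial (2*k+1)) :=
      fun z => (Real.hasSum_sinh _).tsum_eq.symm
    have hbk : ∀ k : ℕ, (∫⁻ z, ‖(s z.1 z.2) ^ (2*k+1) / (Nat.factorial (2*k+1) : ℝ)‖₊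
        ∂(μ.prod μ)) ≤ ENNReal.ofReal (C ^ (2*k+1) / (Nat.factorial (2*k+1))) := by
      intro k
      have hb : ∀ᵐ z ∂(μ.prod μ),
          (‖(s z.1 z.2) ^ (2*k+1) / (Nat.factorial (2*k+1) : ℝ)‖₊ : ℝ≥0∞)
          ≤ ENNReal.ofReal (C ^ (2*k+1) / (Nat.factorial (2*k+1))) := by
        refine haeπ.mono fun z hz => ?_
        rw [← enorm_eq_nnnorm, ← ofReal_norm]
        apply ENNReal.ofReal_le_ofReal
        rw [Real.norm_eq_abs, abs_div, abs_pow, Nat.abs_cast]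
        have h1 : |s z.1 z.2| ^ (2*k+1) ≤ C ^ (2*k+1) :=
          pow_le_pow_left₀ (abs_nonneg _) (hsb _ _ hz.1 hz.2) _
        have h2 : (0:ℝ) < ((2*k+1).factorial : ℝ) :=
          Nat.cast_pos.2 (Nat.factorial_pos _)
        exact (div_le_div_iff_of_pos_right h2).2 h1
      calc (∫⁻ z, ‖(s z.1 z.2) ^ (2*k+1) / (Nat.factorial (2*k+1) : ℝ)‖₊ ∂(μ.prod μ))
          ≤ ∫⁻ _, ENNReal.ofReal (C ^ (2*k+1) / (Nat.factorial (2*k+1))) ∂(μ.prod μ) :=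
            lintegral_mono_ae hb
        _ = ENNReal.ofReal (C ^ (2*k+1) / (Nat.factorial (2*k+1))) := by
            rw [lintegral_const, measure_univ, mul_one]
    have hne : (∑' k : ℕ, ∫⁻ z, ‖(s z.1 z.2) ^ (2*k+1) / (Nat.factorial (2*k+1) : ℝ)‖₊
        ∂(μ.prod μ)) ≠ ⊤ := by
      refine ne_of_lt (lt_of_le_of_lt (ENNReal.tsum_le_tsum hbk) ?_)
      rw [← ENNReal.ofReal_tsum_of_nonneg
        (fun k => div_nonneg (pow_nonneg hC0 _) (by positivity)) hsummable]
      exact ENNReal.ofReal_lt_top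
    simp only [heq]
    rw [integral_tsum (f := fun (k : ℕ) (z : EuclideanSpace ℝ (Fin n) × EuclideanSpace ℝ (Fin n)) => (s z.1 z.2) ^ (2*k+1) / (Nat.factorial (2*k+1) : ℝ)) (fun k => ((hsc.pow _).div_const _).aestronglyMeasurable)
      (by simpa only [enorm_eq_nnnorm] using hne)]
    refine tsum_nonneg fun k => ?_
    rw [integral_div]
    exact div_nonneg (hmoment _) (by positivity)
  -- conclude
  have hPQ : P ≤ Q := by
    have hdiff : Q - P = ∫ z, (Real.exp (s z.1 z.2) - Real.exp (-(s z.1 z.2))) ∂(μ.prod μ) := by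
      rw [hPprod, hQprod, ← integral_sub hintQprod hintPprod]
    have h2s : Q - P = 2 * ∫ z, Real.sinh (s z.1 z.2) ∂(μ.prod μ) := by
      rw [hdiff, ← integral_const_mul]
      exact integral_congr_ae (Filter.Eventually.of_forall fun z => by simp only [Real.sinh_eq]; ring)
    linarith
  rw [hEμ, hEmix]
  linarith
end

section
/- Let D be a symmetric negative definite matrix with smallest eigenvalue λ_min < 0 and let z be a unit eigenvector for λ_min. Then the measure μ* = (1/2)(δ_z + δ_{−z}) maximizes the energy E(μ) = ∬ exp(⟪x, D y⟫) dμ(x) dμ(y) over probability measures on the unit sphere, and E(μ*) = cosh(λ_min). -/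
open MeasureTheory RealInnerProductSpace ENNReal

open Nat Matrix
open scoped MatrixOrder

section Aux

variable {n : ℕ}

/-- Quadratic form lower bound from the minimal eigenvalue. -/
lemma aux_quad (D : Matrix (Fin n) (Fin n) ℝ) (hD : (-D).PosDef)
    (lamMin : ℝ)
    (hmin : ∀ l : ℝ, IsEigenvalue D l → lamMin ≤ l)
    (x : EuclideanSpace ℝ (Fin n)) :
    lamMin * ‖x‖ ^ 2 ≤ ⟪x, Matrix.toEuclideanLin D x⟫ := by
  have hH : D.IsHermitian := by
    have := hD.isHermitian
    rw [Matrix.IsHermitian] at this ⊢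
    simpa [neg_eq_iff_eq_neg] using this
  set b := hH.eigenvectorBasis with hb
  have hsym : (Matrix.toEuclideanLin D).IsSymmetric :=
    (Matrix.isHermitian_iff_isSymmetric).1 hH
  have heig : ∀ i, Matrix.toEuclideanLin D (b i) = hH.eigenvalues i • b i := by
    intro i
    have := hH.mulVec_eigenvectorBasis i
    have h2 : ∀ j, Matrix.toEuclideanLin D (b i) j = (hH.eigenvalues i • b i) j := by
      intro j
      have := congrFun this j
      simpa [Matrix.toEuclideanLin_apply] using this
    exact PiLp.ext h2
  have heval : ∀ i, IsEigenvalue D (hH.eigenvalues i) := by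
    intro i
    refine ⟨b i, ?_, heig i⟩
    intro hzero
    have := b.orthonormal.1 i
    rw [hzero] at this
    simp at this
  have key : ⟪x, Matrix.toEuclideanLin D x⟫ = ∑ i, hH.eigenvalues i * ⟪x, b i⟫ ^ 2 := by
    rw [← b.sum_inner_mul_inner x (Matrix.toEuclideanLin D x)]
    refine Finset.sum_congr rfl fun i _ => ?_
    have : ⟪b i, Matrix.toEuclideanLin D x⟫ = hH.eigenvalues i * ⟪b i, x⟫ := by
      rw [← hsym (b i) x, heig i, real_inner_smul_left]
    rw [this, real_inner_comm (b i) x]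
    ring
  have hnorm : ‖x‖ ^ 2 = ∑ i, ⟪x, b i⟫ ^ 2 := by
    have := b.sum_inner_mul_inner x x
    rw [real_inner_self_eq_norm_sq] at this
    rw [← this]
    refine Finset.sum_congr rfl fun i _ => ?_
    rw [real_inner_comm (b i) x]; ring
  rw [key, hnorm, Finset.mul_sum]
  refine Finset.sum_le_sum fun i _ => ?_
  exact mul_le_mul_of_nonneg_right (hmin _ (heval i)) (sq_nonneg _)

/-- Factorization of the bilinear form through the square root of `-D`. -/
lemma aux_fact (D : Matrix (Fin n) (Fin n) ℝ) (hD : (-D).PosDef)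
    (x y : EuclideanSpace ℝ (Fin n)) :
    ⟪x, Matrix.toEuclideanLin D y⟫ =
      - ⟪Matrix.toEuclideanLin (CFC.sqrt (-D)) x,
         Matrix.toEuclideanLin (CFC.sqrt (-D)) y⟫ := by
  set S := CFC.sqrt (-D) with hS
  have hSsym : Sᵀ = S := by
    have := (Matrix.nonneg_iff_posSemidef.1 (CFC.sqrt_nonneg (-D))).1
    exact (Matrix.conjTranspose_eq_transpose_of_trivial S).symm.trans this
  have hSS : S * S = -D := CFC.sqrt_mul_sqrt_self (-D) hD.posSemidef.nonneg
  have h1 : ∀ u v : EuclideanSpace ℝ (Fin n), ⟪u, v⟫ = (u : Fin n → ℝ) ⬝ᵥ (v : Fin n → ℝ) := by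
    intro u v; simp [PiLp.inner_apply, dotProduct, mul_comm]
  rw [h1, h1]
  show (x : Fin n → ℝ) ⬝ᵥ (D *ᵥ (y : Fin n → ℝ)) =
    - ((S *ᵥ (x : Fin n → ℝ)) ⬝ᵥ (S *ᵥ (y : Fin n → ℝ)))
  have h2 : S *ᵥ (x : Fin n → ℝ) = (x : Fin n → ℝ) ᵥ* S := by
    conv_lhs => rw [← hSsym]
    rw [Matrix.mulVec_transpose]
  rw [Matrix.dotProduct_mulVec (S *ᵥ (x : Fin n → ℝ)), h2, Matrix.vecMul_vecMul, hSS,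
    Matrix.vecMul_neg, neg_dotProduct, neg_neg, Matrix.dotProduct_mulVec]

lemma integrable_dirac'' {α : Type*} [MeasurableSpace α] [MeasurableSingletonClass α]
    (f : α → ℝ) (a : α) : Integrable f (Measure.dirac a) := by
  refine (integrable_const (f a)).congr ?_
  rw [MeasureTheory.ae_dirac_eq]
  exact Filter.eventually_pure.2 rfl

/-- Energy of the symmetric two-point measure. -/
lemma aux_dirac (D : Matrix (Fin n) (Fin n) ℝ) (lamMin : ℝ)
    (z : EuclideanSpace ℝ (Fin n)) (hz : ‖z‖ = 1)
    (hzeig : Matrix.toEuclideanLin D z = lamMin • z) :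
    energy D ((2 : ℝ≥0∞)⁻¹ • (Measure.dirac z + Measure.dirac (-z))) =
      Real.cosh lamMin := by
  have hinner : ∀ x : EuclideanSpace ℝ (Fin n),
      (∫ y, Real.exp ⟪x, Matrix.toEuclideanLin D y⟫
        ∂((2 : ℝ≥0∞)⁻¹ • (Measure.dirac z + Measure.dirac (-z)))) =
      (1/2) * (Real.exp (lamMin * ⟪x, z⟫) + Real.exp (-(lamMin * ⟪x, z⟫))) := by
    intro x
    rw [integral_smul_measure,
      integral_add_measure (integrable_dirac'' _ _) (integrable_dirac'' _ _),
      integral_dirac, integral_dirac]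
    have h1 : ⟪x, Matrix.toEuclideanLin D z⟫ = lamMin * ⟪x, z⟫ := by
      rw [hzeig, real_inner_smul_right]
    have h2 : ⟪x, Matrix.toEuclideanLin D (-z)⟫ = -(lamMin * ⟪x, z⟫) := by
      rw [map_neg, inner_neg_right, h1]
    rw [h1, h2]
    rw [ENNReal.toReal_inv, smul_eq_mul]
    norm_num
  unfold energy
  simp_rw [hinner]
  rw [integral_smul_measure,
    integral_add_measure (integrable_dirac'' _ _) (integrable_dirac'' _ _),
    integral_dirac, integral_dirac]
  have hzz : ⟪z, z⟫ = 1 := by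
    rw [real_inner_self_eq_norm_sq, hz]; norm_num
  have hnzz : ⟪(-z : EuclideanSpace ℝ (Fin n)), z⟫ = -1 := by
    rw [inner_neg_left, hzz]
  rw [hzz, hnzz, Real.cosh_eq]
  simp [ENNReal.toReal_inv, smul_eq_mul]
  ring

/-- Coordinates are bounded by the norm in Euclidean space. -/
lemma aux_coord_le (u : EuclideanSpace ℝ (Fin n)) (i : Fin n) : |u i| ≤ ‖u‖ := by
  have h : ⟪EuclideanSpace.single i (1 : ℝ), u⟫ = u i := by
    simp [PiLp.inner_apply, EuclideanSpace.single_apply]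
  calc |u i| = |⟪EuclideanSpace.single i (1 : ℝ), u⟫| := by rw [h]
    _ ≤ ‖EuclideanSpace.single i (1 : ℝ)‖ * ‖u‖ := abs_real_inner_le_norm _ _
    _ = ‖u‖ := by rw [EuclideanSpace.norm_single]; simp

/-- Tensor-power expansion of a power of the inner product. -/
lemma aux_pow_inner (m : ℕ) (u v : EuclideanSpace ℝ (Fin n)) :
    ⟪u, v⟫ ^ m = ∑ α : Fin m → Fin n, (∏ j, u (α j)) * (∏ j, v (α j)) := by
  have h : ⟪u, v⟫ = ∑ i, u i * v i := by simp [PiLp.inner_apply, mul_comm]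
  rw [h, Fintype.sum_pow]
  refine Finset.sum_congr rfl fun α _ => ?_
  rw [← Finset.prod_mul_distrib]

/-- Positivity of the even moment functional. -/
lemma aux_T_nonneg (μ : Measure (EuclideanSpace ℝ (Fin n))) [IsProbabilityMeasure μ]
    (g : EuclideanSpace ℝ (Fin n) → EuclideanSpace ℝ (Fin n)) (hg : Continuous g)
    (K : ℝ) (hK0 : 0 ≤ K) (hK : ∀ᵐ x ∂μ, ‖g x‖ ≤ K) (m : ℕ) :
    0 ≤ ∫ p, ⟪g p.1, g p.2⟫ ^ m ∂(μ.prod μ) := by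
  set P : (Fin m → Fin n) → EuclideanSpace ℝ (Fin n) → ℝ :=
    fun α x => ∏ j, g x (α j) with hP
  have hPcont : ∀ α, Continuous (P α) := by
    intro α
    exact continuous_finset_prod _ fun j _ => (EuclideanSpace.proj (α j) : EuclideanSpace ℝ (Fin n) →L[ℝ] ℝ).continuous.comp hg
  have hPbound : ∀ α, ∀ᵐ x ∂μ, ‖P α x‖ ≤ K ^ m := by
    intro α
    filter_upwards [hK] with x hx
    calc ‖P α x‖ = |∏ j, g x (α j)| := rfl
      _ ≤ ∏ j : Fin m, |g x (α j)| := (Finset.abs_prod _ _).le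
      _ ≤ ∏ _j : Fin m, K :=
          Finset.prod_le_prod (fun j _ => abs_nonneg _)
            (fun j _ => le_trans (aux_coord_le (g x) (α j)) hx)
      _ = K ^ m := by rw [Finset.prod_const]; simp
  have hPint : ∀ α, Integrable (P α) μ := by
    intro α
    exact Integrable.mono' (integrable_const (K ^ m))
      (hPcont α).aestronglyMeasurable (hPbound α)
  have key : ∀ p : EuclideanSpace ℝ (Fin n) × EuclideanSpace ℝ (Fin n),
      ⟪g p.1, g p.2⟫ ^ m = ∑ α : Fin m → Fin n, P α p.1 * P α p.2 :=
    fun p => aux_pow_inner m (g p.1) (g p.2)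
  calc (0 : ℝ) ≤ ∑ α : Fin m → Fin n, (∫ x, P α x ∂μ) * (∫ x, P α x ∂μ) :=
        Finset.sum_nonneg fun α _ => mul_self_nonneg _
    _ = ∑ α : Fin m → Fin n, ∫ p, P α p.1 * P α p.2 ∂(μ.prod μ) := by
        refine Finset.sum_congr rfl fun α _ => ?_
        rw [← integral_prod_mul (P α) (P α)]
    _ = ∫ p, ∑ α : Fin m → Fin n, P α p.1 * P α p.2 ∂(μ.prod μ) := by
        rw [integral_finset_sum]
        intro α _
        exact (hPint α).mul_prod (hPint α)
    _ = ∫ p, ⟪g p.1, g p.2⟫ ^ m ∂(μ.prod μ) := by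
        refine integral_congr_ae (Filter.Eventually.of_forall fun p => ?_)
        exact (key p).symm

end Aux

theorem stmt13 {n : ℕ} (D : Matrix (Fin n) (Fin n) ℝ) (hD : (-D).PosDef)
    (lamMin : ℝ) (hlam : IsEigenvalue D lamMin)
    (hmin : ∀ l : ℝ, IsEigenvalue D l → lamMin ≤ l)
    (hneg : lamMin < 0)
    (z : EuclideanSpace ℝ (Fin n)) (hz : ‖z‖ = 1)
    (hzeig : Matrix.toEuclideanLin D z = lamMin • z) :
    (∀ μ : Measure (EuclideanSpace ℝ (Fin n)), IsProbabilityMeasure μ →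
      μ (Metric.sphere (0 : EuclideanSpace ℝ (Fin n)) 1) = 1 →
      energy D μ ≤ energy D ((2 : ℝ≥0∞)⁻¹ • (Measure.dirac z + Measure.dirac (-z)))) ∧
    energy D ((2 : ℝ≥0∞)⁻¹ • (Measure.dirac z + Measure.dirac (-z))) =
      Real.cosh lamMin := by
  have hdirac := aux_dirac D lamMin z hz hzeig
  refine ⟨?_, hdirac⟩
  intro μ hprob hμs
  rw [hdirac]
  -- notation
  obtain ⟨c, hcdef⟩ : ∃ c : ℝ, c = -lamMin := ⟨-lamMin, rfl⟩
  have hc : 0 < c := by rw [hcdef]; exact neg_pos.2 hneg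
  set S := CFC.sqrt (-D) with hS
  set g : EuclideanSpace ℝ (Fin n) → EuclideanSpace ℝ (Fin n) :=
    fun x => Matrix.toEuclideanLin S x with hgdef
  have hgcont : Continuous g := (Matrix.toEuclideanLin S).continuous_of_finiteDimensional
  have hfact : ∀ x y : EuclideanSpace ℝ (Fin n),
      ⟪x, Matrix.toEuclideanLin D y⟫ = - ⟪g x, g y⟫ := fun x y => aux_fact D hD x y
  have hgnorm : ∀ x : EuclideanSpace ℝ (Fin n), ‖x‖ = 1 → ‖g x‖ ≤ Real.sqrt c := by
    intro x hx
    have h1 : ‖g x‖ ^ 2 ≤ c := by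
      have hq := aux_quad D hD lamMin hmin x
      rw [hx] at hq
      have h2 : ⟪x, Matrix.toEuclideanLin D x⟫ = - ⟪g x, g x⟫ := hfact x x
      rw [← real_inner_self_eq_norm_sq]
      rw [h2] at hq
      simp only [one_pow, mul_one] at hq
      rw [hcdef]
      linarith
    calc ‖g x‖ = Real.sqrt (‖g x‖ ^ 2) := by rw [Real.sqrt_sq (norm_nonneg _)]
      _ ≤ Real.sqrt c := Real.sqrt_le_sqrt h1
  -- a.e. facts
  have hsmeas : MeasurableSet (Metric.sphere (0 : EuclideanSpace ℝ (Fin n)) 1) :=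
    Metric.isClosed_sphere.measurableSet
  have hae : ∀ᵐ x ∂μ, ‖x‖ = 1 := by
    have h0 : μ (Metric.sphere (0 : EuclideanSpace ℝ (Fin n)) 1)ᶜ = 0 := by
      rw [measure_compl hsmeas (measure_ne_top μ _), hμs, measure_univ, tsub_self]
    have hmem : ∀ᵐ x ∂μ, x ∈ Metric.sphere (0 : EuclideanSpace ℝ (Fin n)) 1 :=
      MeasureTheory.mem_ae_iff.2 h0
    filter_upwards [hmem] with x hx
    exact mem_sphere_zero_iff_norm.1 hx
  have hgae : ∀ᵐ x ∂μ, ‖g x‖ ≤ Real.sqrt c := by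
    filter_upwards [hae] with x hx
    exact hgnorm x hx
  set π := μ.prod μ with hπ
  have haeπ : ∀ᵐ p ∂π, ‖p.1‖ = 1 ∧ ‖p.2‖ = 1 := by
    set s := Metric.sphere (0 : EuclideanSpace ℝ (Fin n)) 1 with hs
    have h0 : π ((s ×ˢ s : Set _))ᶜ = 0 := by
      rw [measure_compl (hsmeas.prod hsmeas) (measure_ne_top π _), measure_univ,
        Measure.prod_prod, hμs, one_mul, tsub_self]
    have hmem : ∀ᵐ p ∂π, p ∈ (s ×ˢ s : Set _) := MeasureTheory.mem_ae_iff.2 h0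
    filter_upwards [hmem] with p hp
    exact ⟨mem_sphere_zero_iff_norm.1 hp.1, mem_sphere_zero_iff_norm.1 hp.2⟩
  set f : EuclideanSpace ℝ (Fin n) × EuclideanSpace ℝ (Fin n) → ℝ :=
    fun p => ⟪p.1, Matrix.toEuclideanLin D p.2⟫ with hfdef
  have hfcont : Continuous f :=
    continuous_fst.inner
      (((Matrix.toEuclideanLin D).continuous_of_finiteDimensional).comp continuous_snd)
  have habs : ∀ᵐ p ∂π, |f p| ≤ c := by
    filter_upwards [haeπ] with p hp
    rw [hfdef]
    simp only
    rw [hfact p.1 p.2, abs_neg]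
    calc |⟪g p.1, g p.2⟫| ≤ ‖g p.1‖ * ‖g p.2‖ := abs_real_inner_le_norm _ _
      _ ≤ Real.sqrt c * Real.sqrt c :=
          mul_le_mul (hgnorm _ hp.1) (hgnorm _ hp.2) (norm_nonneg _) (Real.sqrt_nonneg _)
      _ = c := Real.mul_self_sqrt hc.le
  -- energy as an integral over the product measure
  have hexp_int : Integrable (fun p => Real.exp (f p)) π := by
    refine Integrable.mono' (integrable_const (Real.exp c))
      (Real.continuous_exp.comp hfcont).aestronglyMeasurable ?_
    filter_upwards [habs] with p hp
    rw [Real.norm_eq_abs, abs_of_pos (Real.exp_pos _)]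
    exact Real.exp_le_exp.2 (le_of_abs_le hp)
  have henergy : energy D μ = ∫ p, Real.exp (f p) ∂π := by
    exact MeasureTheory.integral_integral (μ := μ) (ν := μ)
      (f := fun x y => Real.exp ⟪x, Matrix.toEuclideanLin D y⟫) hexp_int
  -- series expansion
  set F : ℕ → EuclideanSpace ℝ (Fin n) × EuclideanSpace ℝ (Fin n) → ℝ :=
    fun m p => f p ^ m / m ! with hF
  have hFcont : ∀ m, Continuous (F m) := fun m => (hfcont.pow m).div_const _
  have hFbound : ∀ m, ∀ᵐ p ∂π, ‖F m p‖ ≤ c ^ m / m ! := by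
    intro m
    filter_upwards [habs] with p hp
    rw [hF]
    simp only [Real.norm_eq_abs, abs_div, abs_pow, Nat.abs_cast]
    apply div_le_div_of_nonneg_right _ (by positivity)
    · exact pow_le_pow_left₀ (abs_nonneg _) hp m
  have hFint : ∀ m, Integrable (F m) π := fun m =>
    Integrable.mono' (integrable_const (c ^ m / m !))
      (hFcont m).aestronglyMeasurable (hFbound m)
  have hFnorm : ∀ m, (∫ p, ‖F m p‖ ∂π) ≤ c ^ m / m ! := by
    intro m
    calc (∫ p, ‖F m p‖ ∂π) ≤ ∫ _p, c ^ m / m ! ∂π :=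
          integral_mono_ae (hFint m).norm (integrable_const _) (hFbound m)
      _ = c ^ m / m ! := by simp [measure_univ]
  have hsum_norm : Summable fun m => ∫ p, ‖F m p‖ ∂π :=
    Summable.of_nonneg_of_le (fun m => integral_nonneg fun p => norm_nonneg _)
      hFnorm (Real.summable_pow_div_factorial c)
  have hexp_eq : ∀ p, Real.exp (f p) = ∑' m : ℕ, F m p := by
    intro p
    rw [Real.exp_eq_exp_ℝ, NormedSpace.exp_eq_tsum_div]
  have hseries : energy D μ = ∑' m : ℕ, ∫ p, F m p ∂π := by
    rw [henergy, integral_congr_ae (Filter.Eventually.of_forall hexp_eq)]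
    exact (MeasureTheory.integral_tsum_of_summable_integral_norm hFint hsum_norm).symm
  have hsum_int : Summable fun m : ℕ => ∫ p, F m p ∂π :=
    Summable.of_norm_bounded hsum_norm fun m => norm_integral_le_integral_norm _
  set h : ℕ → ℝ := fun m => c ^ m / m ! / 2 + (-c) ^ m / m ! / 2 with hh
  have hsum_h : Summable h :=
    ((Real.summable_pow_div_factorial c).div_const 2).add
      ((Real.summable_pow_div_factorial (-c)).div_const 2)
  have hterm : ∀ m : ℕ, (∫ p, F m p ∂π) ≤ h m := by
    intro m
    have hTnn : 0 ≤ ∫ p, ⟪g p.1, g p.2⟫ ^ m ∂π :=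
      aux_T_nonneg μ g hgcont (Real.sqrt c) (Real.sqrt_nonneg c) hgae m
    have hpowcont : Continuous fun p :
        EuclideanSpace ℝ (Fin n) × EuclideanSpace ℝ (Fin n) => ⟪g p.1, g p.2⟫ ^ m :=
      ((hgcont.comp continuous_fst).inner (hgcont.comp continuous_snd)).pow m
    have hpow_ae : ∀ᵐ p ∂π, |⟪g p.1, g p.2⟫ ^ m| ≤ c ^ m := by
      filter_upwards [habs] with p hp
      have : |f p| = |⟪g p.1, g p.2⟫| := by
        rw [hfdef]; simp only; rw [hfact p.1 p.2, abs_neg]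
      rw [abs_pow]
      rw [this] at hp
      exact pow_le_pow_left₀ (abs_nonneg _) hp m
    have hint_pow : Integrable (fun p => ⟪g p.1, g p.2⟫ ^ m) π := by
      refine Integrable.mono' (integrable_const (c ^ m))
        hpowcont.aestronglyMeasurable ?_
      filter_upwards [hpow_ae] with p hp
      rwa [Real.norm_eq_abs]
    have hTle : (∫ p, ⟪g p.1, g p.2⟫ ^ m ∂π) ≤ c ^ m := by
      calc (∫ p, ⟪g p.1, g p.2⟫ ^ m ∂π) ≤ |∫ p, ⟪g p.1, g p.2⟫ ^ m ∂π| := le_abs_self _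
        _ ≤ ∫ p, |⟪g p.1, g p.2⟫ ^ m| ∂π := by
            have := norm_integral_le_integral_norm (μ := π)
              (fun p => ⟪g p.1, g p.2⟫ ^ m)
            simpa [Real.norm_eq_abs] using this
        _ ≤ ∫ _p, c ^ m ∂π := integral_mono_ae hint_pow.abs (integrable_const _) hpow_ae
        _ = c ^ m := by simp [measure_univ]
    have hFm_eq : (∫ p, F m p ∂π) =
        (-1) ^ m * (∫ p, ⟪g p.1, g p.2⟫ ^ m ∂π) / m ! := by
      rw [hF]
      simp only
      rw [integral_div]
      congr 1
      rw [← MeasureTheory.integral_const_mul]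
      refine integral_congr_ae (Filter.Eventually.of_forall fun p => ?_)
      show f p ^ m = (-1) ^ m * ⟪g p.1, g p.2⟫ ^ m
      rw [hfdef]
      simp only
      rw [hfact p.1 p.2, neg_pow]
    have hfac_pos : (0 : ℝ) < (m ! : ℝ) := by positivity
    rw [hFm_eq, hh]
    simp only
    rcases Nat.even_or_odd m with hm | hm
    · rw [hm.neg_one_pow, one_mul, hm.neg_pow c]
      have hdiv : (∫ p, ⟪g p.1, g p.2⟫ ^ m ∂π) / (m ! : ℝ) ≤ c ^ m / (m ! : ℝ) := by gcongr
      linarith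
    · rw [hm.neg_one_pow, hm.neg_pow c]
      have h0 : (-1 * (∫ p, ⟪g p.1, g p.2⟫ ^ m ∂π)) / (m ! : ℝ) ≤ 0 := by
        rw [neg_one_mul, neg_div, neg_nonpos]
        exact div_nonneg hTnn hfac_pos.le
      have heq : c ^ m / (m ! : ℝ) / 2 + -c ^ m / (m ! : ℝ) / 2 = 0 := by ring
      linarith [heq]
  calc energy D μ = ∑' m : ℕ, ∫ p, F m p ∂π := hseries
    _ ≤ ∑' m : ℕ, h m := Summable.tsum_le_tsum hterm hsum_int hsum_h
    _ = Real.cosh lamMin := by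
      rw [hh]
      rw [Summable.tsum_add ((Real.summable_pow_div_factorial c).div_const 2)
        ((Real.summable_pow_div_factorial (-c)).div_const 2),
        tsum_div_const, tsum_div_const]
      have e1 : ∑' m : ℕ, c ^ m / (m ! : ℝ) = Real.exp c := by
        rw [Real.exp_eq_exp_ℝ, NormedSpace.exp_eq_tsum_div]
      have e2 : ∑' m : ℕ, (-c) ^ m / (m ! : ℝ) = Real.exp (-c) := by
        rw [Real.exp_eq_exp_ℝ, NormedSpace.exp_eq_tsum_div]
      rw [e1, e2, Real.cosh_eq, hcdef, neg_neg]
      ring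
end

section
/- Let Z be a finite set of pairwise orthogonal unit eigenvectors of the symmetric matrix D, and let t : Z → [0,∞) with Σ_{z∈Z} t(z) = 1. Then the measure μ = (1/2) Σ_{z∈Z} t(z)(δ_z + δ_{−z}) satisfies the stationarity condition ∫_S e^{⟪w, D y⟫} P_w^⊥(D y) dμ(y) = 0 for every w ∈ Z ∪ (−Z). -/
open MeasureTheory RealInnerProductSpace ENNReal

lemma my_integrable_dirac {α E : Type*} [MeasurableSpace α] [MeasurableSingletonClass α]
    [NormedAddCommGroup E] {f : α → E} (hf : StronglyMeasurable f) (a : α) :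
    Integrable f (Measure.dirac a) := by
  refine ⟨hf.aestronglyMeasurable, ?_⟩
  rw [HasFiniteIntegral, lintegral_dirac]
  exact ENNReal.coe_lt_top

theorem stmt17 {n : ℕ} (D : Matrix (Fin n) (Fin n) ℝ) (hD : D.IsSymm)
    (Z : Finset (EuclideanSpace ℝ (Fin n)))
    (hunit : ∀ z ∈ Z, ‖z‖ = 1)
    (heig : ∀ z ∈ Z, ∃ lam : ℝ, Matrix.toEuclideanLin D z = lam • z)
    (horth : ∀ z ∈ Z, ∀ w ∈ Z, z ≠ w → ⟪z, w⟫ = 0)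
    (t : EuclideanSpace ℝ (Fin n) → ℝ)
    (ht0 : ∀ z ∈ Z, 0 ≤ t z) (ht1 : ∑ z ∈ Z, t z = 1)
    (μ : Measure (EuclideanSpace ℝ (Fin n)))
    (hμ : μ = (2 : ℝ≥0∞)⁻¹ •
      ∑ z ∈ Z, ENNReal.ofReal (t z) • (Measure.dirac z + Measure.dirac (-z))) :
    ∀ w : EuclideanSpace ℝ (Fin n), (w ∈ Z ∨ -w ∈ Z) →
      (∫ y, Real.exp ⟪w, Matrix.toEuclideanLin D y⟫ •
          (Matrix.toEuclideanLin D y - ⟪w, Matrix.toEuclideanLin D y⟫ • w) ∂μ) = 0 := by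
  intro w hw
  subst hμ
  set T := Matrix.toEuclideanLin D with hT
  set f : EuclideanSpace ℝ (Fin n) → EuclideanSpace ℝ (Fin n) :=
    fun y => Real.exp ⟪w, T y⟫ • (T y - ⟪w, T y⟫ • w) with hf
  have hTc : Continuous T := T.continuous_of_finiteDimensional
  have hfc : Continuous f := by
    apply Continuous.fun_smul
    · exact Real.continuous_exp.comp ((continuous_const.inner hTc))
    · exact hTc.sub ((continuous_const.inner hTc).fun_smul continuous_const)
  -- key pointwise fact
  have key : ∀ z ∈ Z, f z + f (-z) = 0 := by
    intro z hz
    obtain ⟨lam, hlam⟩ := heig z hz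
    have expand : f z + f (-z) =
        Real.exp ⟪w, T z⟫ • (T z - ⟪w, T z⟫ • w) +
        Real.exp (-⟪w, T z⟫) • (-(T z) - (-⟪w, T z⟫) • w) := by
      simp only [hf, map_neg, inner_neg_right]
    rw [expand]
    by_cases h1 : z = w
    · subst h1
      have hc : ⟪z, T z⟫ = lam := by
        rw [hlam, real_inner_smul_right, real_inner_self_eq_norm_sq, hunit z hz]
        ring
      rw [hc, hlam]
      module
    · by_cases h2 : z = -w
      · have h1' : w = -z := by rw [h2]; simp
        subst h1'
        have hc : ⟪-z, T z⟫ = -lam := by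
          rw [hlam, inner_neg_left, real_inner_smul_right,
            real_inner_self_eq_norm_sq, hunit z hz]
          ring
        rw [hc, hlam]
        module
      · have horthw : ⟪w, z⟫ = 0 := by
          rcases hw with hw | hw
          · have := horth z hz w hw h1
            rwa [real_inner_comm] at this
          · have := horth z hz (-w) hw h2
            rw [real_inner_comm] at this
            rwa [inner_neg_left, neg_eq_zero] at this
        have hc : ⟪w, T z⟫ = 0 := by
          rw [hlam, real_inner_smul_right, horthw, mul_zero]
        rw [hc, hlam]
        simp
  -- integrability
  have hint : ∀ z ∈ Z, Integrable f
      (ENNReal.ofReal (t z) • (Measure.dirac z + Measure.dirac (-z))) := by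
    intro z hz
    refine Integrable.smul_measure ?_ ENNReal.ofReal_ne_top
    exact (my_integrable_dirac hfc.stronglyMeasurable z).add_measure
      (my_integrable_dirac hfc.stronglyMeasurable (-z))
  rw [integral_smul_measure, integral_finset_sum_measure hint]
  have : ∀ z ∈ Z, (∫ y, f y ∂(ENNReal.ofReal (t z) •
      (Measure.dirac z + Measure.dirac (-z)))) = 0 := by
    intro z hz
    rw [integral_smul_measure, integral_add_measure
        (my_integrable_dirac hfc.stronglyMeasurable z)
        (my_integrable_dirac hfc.stronglyMeasurable (-z)),
      integral_dirac, integral_dirac]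
    rw [key z hz, smul_zero]
  rw [Finset.sum_congr rfl this]
  simp
end
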